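/- arXiv:2010.06129 — 3 statements merged into one kernel-verified Lean document; each statement's English description precedes it below -/
import Mathlib

section
/- Write ζ=ξ+√−1·η and z=x+√−1·y. For z,ζ∈ℍ the kernel log|(ζ−z̄)/(ζ−z)| is non-negative. There exists a constant C_0>0 such that for every z∈ℍ: 0 ≤ ∫_{−∞}^{∞}dξ ∫_0^{∞} (1+η²)^{−1} · log|(ζ−z̄)/(ζ−z)| dη ≤ C_0·log(1+y). Moreover, for every δ>0 there exists C_δ>0 such that for every z∈ℍ: 0 ≤ ∫_{−∞}^{∞}dξ ∫_0^{∞} (1+η²)^{−1−δ} · log|(ζ−z̄)/(ζ−z)| dη ≤ C_δ·y/(1+y); in particular both double integrals are finite. -/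
open MeasureTheory

/-- The Green-type kernel `log |(ζ - conj z)/(ζ - z)|` with `ζ = ξ + iη`. -/
noncomputable def kernelK (z : ℂ) (p : ℝ × ℝ) : ℝ :=
  Real.log (‖((p.1 : ℂ) + (p.2 : ℂ) * Complex.I - (starRingEnd ℂ) z) /
    ((p.1 : ℂ) + (p.2 : ℂ) * Complex.I - z)‖)

open MeasureTheory Set Filter Real Topology

namespace GreenAux

noncomputable def Fa (a : ℝ) (t : ℝ) : ℝ :=
  t * Real.log (t ^ 2 + a ^ 2) + 2 * a * Real.arctan (t / a)

lemma hasDerivAt_Fa {a : ℝ} (ha : 0 < a) (t : ℝ) :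
    HasDerivAt (Fa a) (Real.log (t ^ 2 + a ^ 2) + 2) t := by
  have hpos : 0 < t ^ 2 + a ^ 2 := by positivity
  have h1 : HasDerivAt (fun s : ℝ => s ^ 2 + a ^ 2) (2 * t) t := by
    simpa using (hasDerivAt_pow 2 t).add_const (a ^ 2)
  have h2 : HasDerivAt (fun s : ℝ => Real.log (s ^ 2 + a ^ 2))
      ((t ^ 2 + a ^ 2)⁻¹ * (2 * t)) t :=
    (Real.hasDerivAt_log hpos.ne').comp (h₂ := Real.log) t h1
  have h3 : HasDerivAt (fun s : ℝ => s * Real.log (s ^ 2 + a ^ 2))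
      (1 * Real.log (t ^ 2 + a ^ 2) + t * ((t ^ 2 + a ^ 2)⁻¹ * (2 * t))) t :=
    (hasDerivAt_id t).mul h2
  have h4 : HasDerivAt (fun s : ℝ => s / a) (1 / a) t := by
    simpa using (hasDerivAt_id t).div_const a
  have h5 : HasDerivAt (fun s : ℝ => Real.arctan (s / a))
      (1 / (1 + (t / a) ^ 2) * (1 / a)) t :=
    (Real.hasDerivAt_arctan (t / a)).comp (h₂ := Real.arctan) t h4
  have h6 := h3.add (h5.const_mul (2 * a))
  refine h6.congr_deriv ?_
  have h7 : 1 + (t / a) ^ 2 = (t ^ 2 + a ^ 2) / a ^ 2 := by field_simp; ring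
  rw [h7]
  field_simp
  ring

lemma tendsto_Fa_sub {a b : ℝ} (hb : 0 < b) (hba : b ≤ a) :
    Tendsto (fun t => Fa a t - Fa b t) atTop (𝓝 (π * a - π * b)) := by
  have ha : 0 < a := lt_of_lt_of_le hb hba
  have harc : ∀ c : ℝ, 0 < c →
      Tendsto (fun t : ℝ => 2 * c * Real.arctan (t / c)) atTop (𝓝 (2 * c * (π / 2))) := by
    intro c hc
    exact ((Real.tendsto_arctan_atTop.mono_right nhdsWithin_le_nhds).comp
      (tendsto_id.atTop_div_const hc)).const_mul (2 * c)
  have hlog : Tendsto (fun t : ℝ =>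
      t * (Real.log (t ^ 2 + a ^ 2) - Real.log (t ^ 2 + b ^ 2))) atTop (𝓝 0) := by
    apply tendsto_of_tendsto_of_tendsto_of_le_of_le' (g := fun _ : ℝ => (0 : ℝ))
      (h := fun t : ℝ => (a ^ 2 - b ^ 2) * t⁻¹)
    · exact tendsto_const_nhds
    · simpa using tendsto_inv_atTop_zero.const_mul (a ^ 2 - b ^ 2)
    · filter_upwards [eventually_gt_atTop (0 : ℝ)] with t ht
      have hA : (0:ℝ) < t ^ 2 + a ^ 2 := by positivity
      have hB : (0:ℝ) < t ^ 2 + b ^ 2 := by positivity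
      have hle : Real.log (t ^ 2 + b ^ 2) ≤ Real.log (t ^ 2 + a ^ 2) :=
        Real.log_le_log hB (by nlinarith)
      exact mul_nonneg ht.le (sub_nonneg.2 hle)
    · filter_upwards [eventually_gt_atTop (0 : ℝ)] with t ht
      have hA : (0:ℝ) < t ^ 2 + a ^ 2 := by positivity
      have hB : (0:ℝ) < t ^ 2 + b ^ 2 := by positivity
      have h1 : Real.log (t ^ 2 + a ^ 2) - Real.log (t ^ 2 + b ^ 2)
          = Real.log ((t ^ 2 + a ^ 2) / (t ^ 2 + b ^ 2)) :=
        (Real.log_div hA.ne' hB.ne').symm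
      have h2 : Real.log ((t ^ 2 + a ^ 2) / (t ^ 2 + b ^ 2))
          ≤ (t ^ 2 + a ^ 2) / (t ^ 2 + b ^ 2) - 1 :=
        Real.log_le_sub_one_of_pos (div_pos hA hB)
      have h3 : (t ^ 2 + a ^ 2) / (t ^ 2 + b ^ 2) - 1 = (a ^ 2 - b ^ 2) / (t ^ 2 + b ^ 2) := by
        field_simp
        ring
      have h4 : t * ((a ^ 2 - b ^ 2) / (t ^ 2 + b ^ 2)) ≤ (a ^ 2 - b ^ 2) * t⁻¹ := by
        rw [mul_div_assoc', div_le_iff₀ hB]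
        have hab : 0 ≤ a ^ 2 - b ^ 2 := by nlinarith
        have : t * t ≤ t ^ 2 + b ^ 2 := by nlinarith
        calc t * (a ^ 2 - b ^ 2) = (a ^ 2 - b ^ 2) * t := by ring
          _ ≤ (a ^ 2 - b ^ 2) * t⁻¹ * (t * t) := by
              rw [mul_assoc, inv_mul_cancel_left₀ ht.ne']
          _ ≤ (a ^ 2 - b ^ 2) * t⁻¹ * (t ^ 2 + b ^ 2) := by
              apply mul_le_mul_of_nonneg_left this
              positivity
      calc t * (Real.log (t ^ 2 + a ^ 2) - Real.log (t ^ 2 + b ^ 2))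
          ≤ t * ((a ^ 2 - b ^ 2) / (t ^ 2 + b ^ 2)) := by
            rw [h1]
            apply mul_le_mul_of_nonneg_left _ ht.le
            rw [← h3]; exact h2
        _ ≤ (a ^ 2 - b ^ 2) * t⁻¹ := h4
  have h := (hlog.add (harc a ha)).sub (harc b hb)
  have hval : (0 : ℝ) + 2 * a * (π / 2) - 2 * b * (π / 2) = π * a - π * b := by ring
  rw [hval] at h
  exact h.congr (fun t => by simp only [Fa]; ring)


lemma g_nonneg {a b : ℝ} (hb : 0 < b) (hba : b ≤ a) (t : ℝ) :
    0 ≤ Real.log ((t ^ 2 + a ^ 2) / (t ^ 2 + b ^ 2)) := by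
  have hB : (0:ℝ) < t ^ 2 + b ^ 2 := by positivity
  apply Real.log_nonneg
  rw [le_div_iff₀ hB]
  nlinarith

lemma lineIntegral_Ioi {a b : ℝ} (hb : 0 < b) (hba : b ≤ a) :
    IntegrableOn (fun t => Real.log ((t ^ 2 + a ^ 2) / (t ^ 2 + b ^ 2))) (Ioi (0:ℝ)) ∧
    ∫ t in Ioi (0:ℝ), Real.log ((t ^ 2 + a ^ 2) / (t ^ 2 + b ^ 2)) = π * (a - b) := by
  have ha : 0 < a := lt_of_lt_of_le hb hba
  have hderiv : ∀ t ∈ Ici (0:ℝ), HasDerivAt (fun t => Fa a t - Fa b t)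
      (Real.log ((t ^ 2 + a ^ 2) / (t ^ 2 + b ^ 2))) t := by
    intro t _
    have hA : (0:ℝ) < t ^ 2 + a ^ 2 := by positivity
    have hB : (0:ℝ) < t ^ 2 + b ^ 2 := by positivity
    have := (hasDerivAt_Fa ha t).sub (hasDerivAt_Fa hb t)
    have heq : Real.log (t ^ 2 + a ^ 2) + 2 - (Real.log (t ^ 2 + b ^ 2) + 2)
        = Real.log ((t ^ 2 + a ^ 2) / (t ^ 2 + b ^ 2)) := by
      rw [Real.log_div hA.ne' hB.ne']; ring
    rwa [heq] at this
  have hpos : ∀ t ∈ Ioi (0:ℝ), 0 ≤ Real.log ((t ^ 2 + a ^ 2) / (t ^ 2 + b ^ 2)) :=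
    fun t _ => g_nonneg hb hba t
  have htend := tendsto_Fa_sub hb hba
  have hzero : Fa a 0 - Fa b 0 = 0 := by simp [Fa]
  refine ⟨integrableOn_Ioi_deriv_of_nonneg' hderiv hpos htend, ?_⟩
  rw [integral_Ioi_of_hasDerivAt_of_nonneg' hderiv hpos htend, hzero]
  ring

lemma lineIntegral_real {a b : ℝ} (hb : 0 < b) (hba : b ≤ a) :
    Integrable (fun t : ℝ => Real.log ((t ^ 2 + a ^ 2) / (t ^ 2 + b ^ 2))) ∧
    ∫ t : ℝ, Real.log ((t ^ 2 + a ^ 2) / (t ^ 2 + b ^ 2)) = 2 * π * (a - b) := by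
  obtain ⟨hint, hval⟩ := lineIntegral_Ioi hb hba
  set g : ℝ → ℝ := fun t => Real.log ((t ^ 2 + a ^ 2) / (t ^ 2 + b ^ 2)) with hg
  have heven : ∀ t : ℝ, g (-t) = g t := by
    intro t; simp only [hg, neg_sq]
  have hIic : IntegrableOn g (Iic (0:ℝ)) := by
    rw [← (Measure.measurePreserving_neg (volume : Measure ℝ)).integrableOn_comp_preimage
        (Homeomorph.neg ℝ).measurableEmbedding]
    simp only [Function.comp_def, neg_preimage, neg_Iic, neg_zero]
    have : (fun t : ℝ => g (-t)) = g := funext heven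
    rw [this]
    exact (integrableOn_Ici_iff_integrableOn_Ioi (by simp)).2 hint
  have hInt : Integrable g := by
    rw [← integrableOn_univ, ← Iic_union_Ioi (a := (0:ℝ)), integrableOn_union]
    exact ⟨hIic, hint⟩
  have hIicVal : ∫ t in Iic (0:ℝ), g t = π * (a - b) := by
    have := integral_comp_neg_Ioi (0:ℝ) g
    rw [neg_zero] at this
    rw [← this]
    simp_rw [heven]
    exact hval
  refine ⟨hInt, ?_⟩
  rw [← intervalIntegral.integral_Iic_add_Ioi hIic hint, hIicVal, hval]
  ring


lemma lineIntegral_shift (x : ℝ) {a b : ℝ} (hb : 0 < b) (hba : b ≤ a) :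
    Integrable (fun t : ℝ => Real.log (((t - x) ^ 2 + a ^ 2) / ((t - x) ^ 2 + b ^ 2))) ∧
    ∫ t : ℝ, Real.log (((t - x) ^ 2 + a ^ 2) / ((t - x) ^ 2 + b ^ 2)) = 2 * π * (a - b) := by
  obtain ⟨hint, hval⟩ := lineIntegral_real hb hba
  constructor
  · exact hint.comp_sub_right x
  · rw [integral_sub_right_eq_self
      (fun t : ℝ => Real.log ((t ^ 2 + a ^ 2) / (t ^ 2 + b ^ 2))) x]
    exact hval

lemma kernelK_eq (z : ℂ) (ξ η : ℝ) :
    kernelK z (ξ, η) =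
      Real.log (((ξ - z.re) ^ 2 + (η + z.im) ^ 2) / ((ξ - z.re) ^ 2 + (η - z.im) ^ 2)) / 2 := by
  have hnum : (ξ : ℂ) + (η : ℂ) * Complex.I - (starRingEnd ℂ) z
      = ((ξ - z.re : ℝ) : ℂ) + ((η + z.im : ℝ) : ℂ) * Complex.I := by
    apply Complex.ext <;> simp
  have hden : (ξ : ℂ) + (η : ℂ) * Complex.I - z
      = ((ξ - z.re : ℝ) : ℂ) + ((η - z.im : ℝ) : ℂ) * Complex.I := by
    apply Complex.ext <;> simp
  have hA : (0:ℝ) ≤ (ξ - z.re) ^ 2 + (η + z.im) ^ 2 := by positivity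
  have hB : (0:ℝ) ≤ (ξ - z.re) ^ 2 + (η - z.im) ^ 2 := by positivity
  rw [kernelK, norm_div, hnum, hden, Complex.norm_add_mul_I, Complex.norm_add_mul_I,
    ← Real.sqrt_div hA, Real.log_sqrt (div_nonneg hA hB)]

lemma kernelK_nonneg {z : ℂ} (hz : 0 < z.im) {ξ η : ℝ} (hη : 0 < η) :
    0 ≤ kernelK z (ξ, η) := by
  rw [kernelK_eq]
  rcases eq_or_lt_of_le (by positivity : (0:ℝ) ≤ (ξ - z.re) ^ 2 + (η - z.im) ^ 2) with hB | hB
  · rw [← hB, div_zero, Real.log_zero, zero_div]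
  · apply div_nonneg _ (by norm_num)
    apply Real.log_nonneg
    rw [le_div_iff₀ hB]
    nlinarith [sq_nonneg (ξ - z.re)]

lemma slice (z : ℂ) (hz : 0 < z.im) {η : ℝ} (hη : 0 < η) (hne : η ≠ z.im) :
    Integrable (fun ξ : ℝ => kernelK z (ξ, η)) ∧
    ∫ ξ : ℝ, kernelK z (ξ, η) = 2 * π * min η z.im := by
  set b := |η - z.im| with hbdef
  set a := η + z.im with hadef
  have hb : 0 < b := abs_pos.2 (sub_ne_zero.2 hne)
  have hba : b ≤ a := by
    rw [hbdef, hadef, abs_le]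
    constructor <;> [linarith [hz, hη]; linarith [hz, hη]]
  have hsq : ∀ ξ : ℝ, (ξ - z.re) ^ 2 + (η - z.im) ^ 2 = (ξ - z.re) ^ 2 + b ^ 2 := by
    intro ξ; rw [hbdef, sq_abs]
  have hfun : (fun ξ : ℝ => kernelK z (ξ, η))
      = fun ξ : ℝ => Real.log (((ξ - z.re) ^ 2 + a ^ 2) / ((ξ - z.re) ^ 2 + b ^ 2)) / 2 := by
    funext ξ
    rw [kernelK_eq, hsq ξ, hadef]
  obtain ⟨hint, hval⟩ := lineIntegral_shift z.re hb hba
  have hmin : a - b = 2 * min η z.im := by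
    rcases le_total η z.im with h | h
    · rw [hbdef, hadef, abs_of_nonpos (by linarith), min_eq_left h]; ring
    · rw [hbdef, hadef, abs_of_nonneg (by linarith), min_eq_right h]; ring
  constructor
  · rw [hfun]; exact hint.div_const 2
  · rw [hfun]
    rw [integral_div]
    rw [hval, hmin]
    ring


lemma invsq_Ioi {y : ℝ} (hy : 0 < y) :
    IntegrableOn (fun η : ℝ => (η ^ 2)⁻¹) (Ioi y) ∧
    ∫ η in Ioi y, (η ^ 2)⁻¹ = y⁻¹ := by
  have hderiv : ∀ t ∈ Ici y, HasDerivAt (fun s : ℝ => -s⁻¹) ((t ^ 2)⁻¹) t := by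
    intro t ht
    have htpos : 0 < t := lt_of_lt_of_le hy ht
    simpa using (hasDerivAt_inv htpos.ne').fun_neg
  have hpos : ∀ t ∈ Ioi y, (0:ℝ) ≤ (t ^ 2)⁻¹ := fun t _ => by positivity
  have htend : Tendsto (fun s : ℝ => -s⁻¹) atTop (𝓝 0) := by
    have h : Tendsto (fun s : ℝ => s⁻¹) atTop (𝓝 (0:ℝ)) := tendsto_inv_atTop_zero
    simpa using h.neg
  refine ⟨integrableOn_Ioi_deriv_of_nonneg' hderiv hpos htend, ?_⟩
  rw [integral_Ioi_of_hasDerivAt_of_nonneg' hderiv hpos htend]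
  simp

lemma log_two_mul_le {y : ℝ} (h0 : 0 ≤ y) (h1 : y ≤ 1) :
    y * Real.log 2 ≤ Real.log (1 + y) := by
  have hexp : Real.exp (y * Real.log 2) ≤ 1 + y := by
    have h := convexOn_exp.2 (Set.mem_univ (0:ℝ)) (Set.mem_univ (Real.log 2))
      (by linarith : (0:ℝ) ≤ 1 - y) h0 (by ring)
    simp only [smul_eq_mul, mul_zero, zero_add, Real.exp_zero, mul_one,
      Real.exp_log two_pos] at h
    linarith
  calc y * Real.log 2 = Real.log (Real.exp (y * Real.log 2)) := (Real.log_exp _).symm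
    _ ≤ Real.log (1 + y) := Real.log_le_log (Real.exp_pos _) hexp

lemma min_weight_integrable {w : ℝ → ℝ} (hw : Integrable w)
    (hwc : Continuous w) (hw0 : ∀ η, 0 ≤ w η) {y c : ℝ} (hy : 0 < y) (hc : 0 ≤ c) :
    IntegrableOn (fun η : ℝ => w η * (c * min η y)) (Ioi 0) := by
  apply Integrable.mono' ((hw.const_mul (c * y)).integrableOn (s := Ioi 0))
  · exact ((hwc.mul (continuous_const.mul
      (continuous_id.min continuous_const)))).aestronglyMeasurable
  · filter_upwards [ae_restrict_mem measurableSet_Ioi] with η hη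
    have hη0 : (0:ℝ) < η := hη
    have h1 : 0 ≤ min η y := le_min hη0.le hy.le
    have h0 : 0 ≤ w η * (c * min η y) := mul_nonneg (hw0 η) (mul_nonneg hc h1)
    rw [Real.norm_eq_abs, abs_of_nonneg h0]
    have : min η y ≤ y := min_le_right _ _
    have := mul_le_mul_of_nonneg_left this hc
    calc w η * (c * min η y) ≤ w η * (c * y) := by
          apply mul_le_mul_of_nonneg_left _ (hw0 η)
          exact mul_le_mul_of_nonneg_left (min_le_right _ _) hc
      _ = c * y * w η := by ring

lemma outer0 {y : ℝ} (hy : 0 < y) :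
    IntegrableOn (fun η : ℝ => (1 + η ^ 2)⁻¹ * min η y) (Ioi 0) ∧
    ∫ η in Ioi (0:ℝ), (1 + η ^ 2)⁻¹ * min η y
      ≤ (1 + π / (2 * Real.log 2)) * Real.log (1 + y) := by
  have hwc : Continuous (fun η : ℝ => (1 + η ^ 2)⁻¹) :=
    (continuous_const.add (continuous_pow 2)).inv₀ (fun x => (by positivity : (0:ℝ) < 1 + x ^ 2).ne')
  have hw0 : ∀ η : ℝ, (0:ℝ) ≤ (1 + η ^ 2)⁻¹ := fun η => by positivity
  have hint : IntegrableOn (fun η : ℝ => (1 + η ^ 2)⁻¹ * min η y) (Ioi 0) := by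
    have := min_weight_integrable integrable_inv_one_add_sq hwc hw0 hy (le_of_lt one_pos)
    simpa using this
  refine ⟨hint, ?_⟩
  have hlog2 : (0:ℝ) < Real.log 2 := Real.log_pos one_lt_two
  have hlogy : (0:ℝ) ≤ Real.log (1 + y) := Real.log_nonneg (by linarith)
  -- split the integral
  have hsplit : Ioi (0:ℝ) = Ioc 0 y ∪ Ioi y := (Ioc_union_Ioi_eq_Ioi hy.le).symm
  have hint1 : IntegrableOn (fun η : ℝ => (1 + η ^ 2)⁻¹ * min η y) (Ioc 0 y) :=
    hint.mono_set Ioc_subset_Ioi_self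
  have hint2 : IntegrableOn (fun η : ℝ => (1 + η ^ 2)⁻¹ * min η y) (Ioi y) :=
    hint.mono_set (Ioi_subset_Ioi hy.le)
  have hK : ∫ η in Ioi (0:ℝ), (1 + η ^ 2)⁻¹ * min η y
      = (∫ η in Ioc (0:ℝ) y, (1 + η ^ 2)⁻¹ * min η y)
      + ∫ η in Ioi y, (1 + η ^ 2)⁻¹ * min η y := by
    rw [hsplit]
    exact setIntegral_union (Ioc_disjoint_Ioi le_rfl) measurableSet_Ioi hint1 hint2
  -- first piece
  have hK1 : ∫ η in Ioc (0:ℝ) y, (1 + η ^ 2)⁻¹ * min η y = Real.log (1 + y ^ 2) / 2 := by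
    have hcongr : ∫ η in Ioc (0:ℝ) y, (1 + η ^ 2)⁻¹ * min η y
        = ∫ η in Ioc (0:ℝ) y, (1 + η ^ 2)⁻¹ * η := by
      apply setIntegral_congr_fun measurableSet_Ioc
      intro η hη
      simp only [min_eq_left hη.2]
    rw [hcongr, ← intervalIntegral.integral_of_le hy.le]
    have hFTC : ∫ t in (0:ℝ)..y, (1 + t ^ 2)⁻¹ * t
        = Real.log (1 + y ^ 2) / 2 - Real.log (1 + 0 ^ 2) / 2 := by
      apply intervalIntegral.integral_eq_sub_of_hasDerivAt
      · intro t _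
        have hpos : (0:ℝ) < 1 + t ^ 2 := by positivity
        have h1 : HasDerivAt (fun s : ℝ => 1 + s ^ 2) (2 * t) t := by
          simpa using ((hasDerivAt_pow 2 t).const_add 1)
        have h2 := ((Real.hasDerivAt_log hpos.ne').comp t h1).div_const 2
        refine h2.congr_deriv ?_
        field_simp
      · exact ((hwc.mul continuous_id).intervalIntegrable 0 y)
    rw [hFTC]
    norm_num
  have hK1le : Real.log (1 + y ^ 2) / 2 ≤ Real.log (1 + y) := by
    have h1 : Real.log (1 + y ^ 2) ≤ Real.log ((1 + y) ^ 2) :=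
      Real.log_le_log (by positivity) (by nlinarith)
    have h2 : Real.log ((1 + y) ^ 2) = 2 * Real.log (1 + y) := by
      rw [Real.log_pow]; norm_num
    linarith
  -- second piece
  have hK2 : ∫ η in Ioi y, (1 + η ^ 2)⁻¹ * min η y = (π / 2 - Real.arctan y) * y := by
    have hcongr : ∫ η in Ioi y, (1 + η ^ 2)⁻¹ * min η y
        = ∫ η in Ioi y, (1 + η ^ 2)⁻¹ * y := by
      apply setIntegral_congr_fun measurableSet_Ioi
      intro η hη
      simp only [min_eq_right (le_of_lt (mem_Ioi.mp hη))]
    rw [hcongr, integral_mul_const, integral_Ioi_inv_one_add_sq]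
  have hK2le : (π / 2 - Real.arctan y) * y ≤ π / (2 * Real.log 2) * Real.log (1 + y) := by
    rcases le_total y 1 with h | h
    · have h1 : (π / 2 - Real.arctan y) * y ≤ π / 2 * y := by
        apply mul_le_mul_of_nonneg_right _ hy.le
        have : 0 ≤ Real.arctan y := by
          rw [← Real.arctan_zero]
          exact Real.arctan_strictMono.monotone hy.le
        linarith
      have h2 : y * Real.log 2 ≤ Real.log (1 + y) := log_two_mul_le hy.le h
      have h3 : π / 2 * y ≤ π / (2 * Real.log 2) * Real.log (1 + y) := by
        rw [div_mul_eq_mul_div, div_mul_eq_mul_div, div_le_div_iff₀ two_pos (by positivity)]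
        have hπ : (0:ℝ) < π := Real.pi_pos
        nlinarith
      linarith
    · have h1 : π / 2 - Real.arctan y ≤ y⁻¹ := by
        obtain ⟨hisq, hvsq⟩ := invsq_Ioi hy
        have hmono : ∫ η in Ioi y, (1 + η ^ 2)⁻¹ ≤ ∫ η in Ioi y, (η ^ 2)⁻¹ := by
          apply setIntegral_mono_on (integrable_inv_one_add_sq.integrableOn) hisq
            measurableSet_Ioi
          intro η hη
          have hη0 : (0:ℝ) < η := lt_trans hy hη
          apply inv_anti₀ (by positivity)
          linarith
        rw [integral_Ioi_inv_one_add_sq] at hmono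
        rw [hvsq] at hmono
        exact hmono
      have h2 : (π / 2 - Real.arctan y) * y ≤ 1 := by
        have := mul_le_mul_of_nonneg_right h1 hy.le
        rwa [inv_mul_cancel₀ hy.ne'] at this
      have h3 : (1:ℝ) ≤ π / (2 * Real.log 2) * Real.log (1 + y) := by
        rw [div_mul_eq_mul_div, le_div_iff₀ (by positivity)]
        have hlog : Real.log 2 ≤ Real.log (1 + y) :=
          Real.log_le_log two_pos (by linarith)
        have hπ : (3:ℝ) ≤ π := le_of_lt Real.pi_gt_three
        nlinarith
      linarith
  rw [hK, hK1]
  have := add_le_add (le_trans (le_of_eq hK1.symm) (le_of_eq hK1)) hK2le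
  calc Real.log (1 + y ^ 2) / 2 + ∫ η in Ioi y, (1 + η ^ 2)⁻¹ * min η y
      = Real.log (1 + y ^ 2) / 2 + (π / 2 - Real.arctan y) * y := by rw [hK2]
    _ ≤ Real.log (1 + y) + π / (2 * Real.log 2) * Real.log (1 + y) := add_le_add hK1le hK2le
    _ = (1 + π / (2 * Real.log 2)) * Real.log (1 + y) := by ring


lemma wdelta_cont {δ : ℝ} : Continuous fun η : ℝ => (1 + η ^ 2) ^ (-1 - δ) :=
  (continuous_const.add (continuous_pow 2)).rpow_const (fun x => Or.inl (by positivity : (0:ℝ) < 1 + x ^ 2).ne')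

lemma wdelta_le {δ : ℝ} (hδ : 0 ≤ δ) (η : ℝ) :
    (1 + η ^ 2) ^ (-1 - δ) ≤ (1 + η ^ 2)⁻¹ := by
  rw [← Real.rpow_neg_one]
  exact Real.rpow_le_rpow_of_exponent_le (by nlinarith [sq_nonneg η]) (by linarith)

lemma wdelta_integrable {δ : ℝ} (hδ : 0 ≤ δ) :
    Integrable (fun η : ℝ => (1 + η ^ 2) ^ (-1 - δ)) := by
  apply Integrable.mono' integrable_inv_one_add_sq wdelta_cont.aestronglyMeasurable
  filter_upwards with η
  rw [Real.norm_eq_abs, abs_of_nonneg (by positivity)]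
  exact wdelta_le hδ η

lemma etaw_Ioi {δ : ℝ} (hδ : 0 < δ) :
    IntegrableOn (fun η : ℝ => η * (1 + η ^ 2) ^ (-1 - δ)) (Ioi 0) ∧
    ∫ η in Ioi (0:ℝ), η * (1 + η ^ 2) ^ (-1 - δ) = 1 / (2 * δ) := by
  have hderiv : ∀ t ∈ Ici (0:ℝ), HasDerivAt
      (fun s : ℝ => -(1 / (2 * δ)) * (1 + s ^ 2) ^ (-δ))
      (t * (1 + t ^ 2) ^ (-1 - δ)) t := by
    intro t _
    have hpos : (0:ℝ) < 1 + t ^ 2 := by positivity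
    have h1 : HasDerivAt (fun s : ℝ => 1 + s ^ 2) (2 * t) t := by
      simpa using ((hasDerivAt_pow 2 t).const_add 1)
    have h2 : HasDerivAt (fun x : ℝ => x ^ (-δ)) (-δ * (1 + t ^ 2) ^ (-δ - 1)) (1 + t ^ 2) :=
      Real.hasDerivAt_rpow_const (Or.inl hpos.ne')
    have h3 := (h2.comp t h1).const_mul (-(1 / (2 * δ)))
    refine h3.congr_deriv ?_
    rw [show (-1 - δ : ℝ) = -δ - 1 by ring]
    field_simp
  have hpos : ∀ t ∈ Ioi (0:ℝ), 0 ≤ t * (1 + t ^ 2) ^ (-1 - δ) := by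
    intro t ht
    have : (0:ℝ) < t := ht
    positivity
  have htend : Tendsto (fun s : ℝ => -(1 / (2 * δ)) * (1 + s ^ 2) ^ (-δ)) atTop (𝓝 0) := by
    have h1 : Tendsto (fun s : ℝ => 1 + s ^ 2) atTop atTop :=
      tendsto_atTop_add_const_left _ _ (tendsto_pow_atTop two_ne_zero)
    have h2 : Tendsto (fun x : ℝ => x ^ (-δ)) atTop (𝓝 0) := tendsto_rpow_neg_atTop hδ
    have h3 := (h2.comp h1).const_mul (-(1 / (2 * δ)))
    simpa using h3
  refine ⟨integrableOn_Ioi_deriv_of_nonneg' hderiv hpos htend, ?_⟩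
  rw [integral_Ioi_of_hasDerivAt_of_nonneg' hderiv hpos htend]
  simp [Real.one_rpow]

lemma outer_delta {δ : ℝ} (hδ : 0 < δ) : ∃ D : ℝ, 0 ≤ D ∧ ∀ y : ℝ, 0 < y →
    IntegrableOn (fun η : ℝ => (1 + η ^ 2) ^ (-1 - δ) * min η y) (Ioi 0) ∧
    ∫ η in Ioi (0:ℝ), (1 + η ^ 2) ^ (-1 - δ) * min η y ≤ D * (y / (1 + y)) := by
  set A : ℝ := ∫ η in Ioi (0:ℝ), (1 + η ^ 2) ^ (-1 - δ) with hA
  set B : ℝ := 1 / (2 * δ) with hB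
  have hA0 : 0 ≤ A := setIntegral_nonneg measurableSet_Ioi (fun η _ => by positivity)
  have hB0 : 0 ≤ B := by positivity
  obtain ⟨hetaint, hetaval⟩ := etaw_Ioi hδ
  refine ⟨2 * (A + B), by positivity, fun y hy => ?_⟩
  have hw0 : ∀ η : ℝ, (0:ℝ) ≤ (1 + η ^ 2) ^ (-1 - δ) := fun η => by positivity
  have hint : IntegrableOn (fun η : ℝ => (1 + η ^ 2) ^ (-1 - δ) * min η y) (Ioi 0) := by
    have := min_weight_integrable (wdelta_integrable hδ.le) wdelta_cont hw0 hy
      (le_of_lt one_pos)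
    simpa using this
  refine ⟨hint, ?_⟩
  have hyy0 : (0:ℝ) ≤ y / (1 + y) := by positivity
  have hKa : ∫ η in Ioi (0:ℝ), (1 + η ^ 2) ^ (-1 - δ) * min η y ≤ A * y := by
    have h1 : ∫ η in Ioi (0:ℝ), (1 + η ^ 2) ^ (-1 - δ) * min η y
        ≤ ∫ η in Ioi (0:ℝ), (1 + η ^ 2) ^ (-1 - δ) * y := by
      apply setIntegral_mono_on hint ((wdelta_integrable hδ.le).mul_const y).integrableOn
        measurableSet_Ioi
      intro η hη
      exact mul_le_mul_of_nonneg_left (min_le_right _ _) (hw0 η)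
    rw [integral_mul_const] at h1
    exact h1
  have hKb : ∫ η in Ioi (0:ℝ), (1 + η ^ 2) ^ (-1 - δ) * min η y ≤ B := by
    have h1 : ∫ η in Ioi (0:ℝ), (1 + η ^ 2) ^ (-1 - δ) * min η y
        ≤ ∫ η in Ioi (0:ℝ), η * (1 + η ^ 2) ^ (-1 - δ) := by
      apply setIntegral_mono_on hint hetaint measurableSet_Ioi
      intro η hη
      calc (1 + η ^ 2) ^ (-1 - δ) * min η y ≤ (1 + η ^ 2) ^ (-1 - δ) * η :=
            mul_le_mul_of_nonneg_left (min_le_left _ _) (hw0 η)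
        _ = η * (1 + η ^ 2) ^ (-1 - δ) := by ring
    rw [hetaval] at h1
    exact h1
  rcases le_total y 1 with h | h
  · have h2 : y / 2 ≤ y / (1 + y) := by
      rw [div_le_div_iff₀ (by positivity) (by positivity)]
      nlinarith
    nlinarith [mul_le_mul_of_nonneg_left h2 (by positivity : (0:ℝ) ≤ 2 * A),
      mul_nonneg hB0 hyy0]
  · have h2 : (1:ℝ) / 2 ≤ y / (1 + y) := by
      rw [div_le_div_iff₀ (by positivity) (by positivity)]
      nlinarith
    nlinarith [mul_le_mul_of_nonneg_left h2 (by positivity : (0:ℝ) ≤ 2 * B),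
      mul_nonneg hA0 hyy0]


lemma kernelK_measurable (z : ℂ) : Measurable (kernelK z) := by
  have hc1 : Continuous fun p : ℝ × ℝ =>
      (p.1 : ℂ) + (p.2 : ℂ) * Complex.I - (starRingEnd ℂ) z :=
    ((Complex.continuous_ofReal.comp continuous_fst).add
      ((Complex.continuous_ofReal.comp continuous_snd).mul continuous_const)).sub
      continuous_const
  have hc2 : Continuous fun p : ℝ × ℝ => (p.1 : ℂ) + (p.2 : ℂ) * Complex.I - z :=
    ((Complex.continuous_ofReal.comp continuous_fst).add
      ((Complex.continuous_ofReal.comp continuous_snd).mul continuous_const)).sub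
      continuous_const
  unfold kernelK
  simp only [div_eq_mul_inv]
  exact Real.measurable_log.comp (continuous_norm.measurable.comp
    (hc1.measurable.mul hc2.measurable.inv))

lemma fubini_glue (z : ℂ) (hz : 0 < z.im) (w : ℝ → ℝ) (hw_meas : Measurable w)
    (hw0 : ∀ η, 0 ≤ w η)
    (houter : IntegrableOn (fun η : ℝ => w η * (2 * π * min η z.im)) (Ioi 0)) :
    IntegrableOn (fun p : ℝ × ℝ => w p.2 * kernelK z p) (univ ×ˢ Ioi 0) volume ∧
    ∫ p in univ ×ˢ Ioi (0:ℝ), w p.2 * kernelK z p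
      = ∫ η in Ioi (0:ℝ), w η * (2 * π * min η z.im) := by
  set f : ℝ × ℝ → ℝ := fun p => w p.2 * kernelK z p with hf
  have hf_meas : Measurable f := (hw_meas.comp measurable_snd).mul (kernelK_measurable z)
  have hmeasure : (volume : Measure (ℝ × ℝ)).restrict (univ ×ˢ Ioi 0)
      = (volume : Measure ℝ).prod ((volume : Measure ℝ).restrict (Ioi 0)) := by
    rw [Measure.volume_eq_prod, ← Measure.prod_restrict, Measure.restrict_univ]
  have hae : ∀ᵐ η ∂((volume : Measure ℝ).restrict (Ioi (0:ℝ))), 0 < η ∧ η ≠ z.im := by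
    have h1 : ∀ᵐ η ∂((volume : Measure ℝ).restrict (Ioi (0:ℝ))), 0 < η :=
      ae_restrict_mem measurableSet_Ioi
    have h2 : ∀ᵐ η ∂(volume : Measure ℝ), η ≠ z.im := by
      rw [ae_iff]
      have hset : {a : ℝ | ¬ a ≠ z.im} = {z.im} := by ext a; simp
      rw [hset]
      exact measure_singleton z.im
    exact h1.and (ae_restrict_of_ae h2)
  have hslice : ∀ η : ℝ, 0 < η → η ≠ z.im →
      Integrable (fun ξ : ℝ => f (ξ, η)) ∧
      ∫ ξ : ℝ, f (ξ, η) = w η * (2 * π * min η z.im) := by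
    intro η hη hne
    obtain ⟨hi, hv⟩ := slice z hz hη hne
    refine ⟨hi.const_mul (w η), ?_⟩
    simp only [hf]
    rw [integral_const_mul, hv]
  have hInt : Integrable f ((volume : Measure ℝ).prod
      ((volume : Measure ℝ).restrict (Ioi 0))) := by
    rw [integrable_prod_iff' hf_meas.aestronglyMeasurable]
    constructor
    · filter_upwards [hae] with η hη
      exact (hslice η hη.1 hη.2).1
    · apply Integrable.congr houter
      filter_upwards [hae] with η hη
      obtain ⟨hi, hv⟩ := hslice η hη.1 hη.2
      have hnorm : ∀ ξ : ℝ, ‖f (ξ, η)‖ = f (ξ, η) := by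
        intro ξ
        rw [Real.norm_eq_abs, abs_of_nonneg]
        exact mul_nonneg (hw0 η) (kernelK_nonneg hz hη.1)
      calc w η * (2 * π * min η z.im) = ∫ ξ : ℝ, f (ξ, η) := hv.symm
        _ = ∫ ξ : ℝ, ‖f (ξ, η)‖ := by
            apply integral_congr_ae
            filter_upwards with ξ
            exact (hnorm ξ).symm
  constructor
  · rw [IntegrableOn, hmeasure]
    exact hInt
  · rw [show (∫ p in univ ×ˢ Ioi (0:ℝ), w p.2 * kernelK z p)
        = ∫ p, f p ∂((volume : Measure (ℝ × ℝ)).restrict (univ ×ˢ Ioi 0)) from rfl,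
      hmeasure, integral_prod_symm f hInt]
    apply integral_congr_ae
    filter_upwards [hae] with η hη
    exact (hslice η hη.1 hη.2).2

end GreenAux

open GreenAux

/-- estimates for integrals of the Green kernel against weights
`(1+η²)⁻¹` and `(1+η²)^{-1-δ}` over the upper half plane. -/
theorem green_kernel_integral_estimates :
    (∀ z : ℂ, 0 < z.im → ∀ p : ℝ × ℝ, 0 < p.2 → 0 ≤ kernelK z p) ∧
    (∃ C₀ : ℝ, 0 < C₀ ∧ ∀ z : ℂ, 0 < z.im →
      IntegrableOn (fun p : ℝ × ℝ => (1 + p.2 ^ 2)⁻¹ * kernelK z p)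
        (Set.univ ×ˢ Set.Ioi 0) volume ∧
      0 ≤ (∫ p in Set.univ ×ˢ Set.Ioi (0 : ℝ), (1 + p.2 ^ 2)⁻¹ * kernelK z p) ∧
      (∫ p in Set.univ ×ˢ Set.Ioi (0 : ℝ), (1 + p.2 ^ 2)⁻¹ * kernelK z p) ≤
        C₀ * Real.log (1 + z.im)) ∧
    (∀ δ : ℝ, 0 < δ → ∃ Cδ : ℝ, 0 < Cδ ∧ ∀ z : ℂ, 0 < z.im →
      IntegrableOn (fun p : ℝ × ℝ => (1 + p.2 ^ 2) ^ (-1 - δ) * kernelK z p)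
        (Set.univ ×ˢ Set.Ioi 0) volume ∧
      0 ≤ (∫ p in Set.univ ×ˢ Set.Ioi (0 : ℝ), (1 + p.2 ^ 2) ^ (-1 - δ) * kernelK z p) ∧
      (∫ p in Set.univ ×ˢ Set.Ioi (0 : ℝ), (1 + p.2 ^ 2) ^ (-1 - δ) * kernelK z p) ≤
        Cδ * (z.im / (1 + z.im))) := by

  have hSmeas : MeasurableSet ((Set.univ : Set ℝ) ×ˢ Set.Ioi (0:ℝ)) :=
    MeasurableSet.univ.prod measurableSet_Ioi
  refine ⟨?_, ?_, ?_⟩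
  · intro z hz p hp
    have h := kernelK_nonneg (z := z) hz (ξ := p.1) (η := p.2) hp
    rwa [Prod.mk.eta] at h
  · refine ⟨2 * π * (1 + π / (2 * Real.log 2)), ?_, ?_⟩
    · have h2 : (0:ℝ) < Real.log 2 := Real.log_pos one_lt_two
      have hπ : (0:ℝ) < π := Real.pi_pos
      positivity
    intro z hz
    obtain ⟨hKint, hKle⟩ := outer0 hz
    have hfun : (fun η : ℝ => (1 + η ^ 2)⁻¹ * (2 * π * min η z.im))
        = fun η : ℝ => (2 * π) * ((1 + η ^ 2)⁻¹ * min η z.im) := by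
      funext η; ring
    have houter : IntegrableOn (fun η : ℝ => (1 + η ^ 2)⁻¹ * (2 * π * min η z.im))
        (Set.Ioi 0) := by
      rw [hfun]; exact hKint.const_mul _
    obtain ⟨hglueInt, hglueVal⟩ := fubini_glue z hz (fun η => (1 + η ^ 2)⁻¹)
      (((continuous_const.add (continuous_pow 2)).inv₀ (fun x => (by positivity : (0:ℝ) < 1 + x ^ 2).ne')).measurable)
      (fun η => by positivity) houter
    refine ⟨hglueInt, ?_, ?_⟩
    · apply setIntegral_nonneg hSmeas
      intro p hp
      exact mul_nonneg (by positivity) (kernelK_nonneg hz (Set.mem_prod.mp hp).2)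
    · rw [hglueVal, hfun, integral_const_mul]
      have hπ : (0:ℝ) ≤ 2 * π := by positivity
      calc 2 * π * ∫ η in Set.Ioi (0:ℝ), (1 + η ^ 2)⁻¹ * min η z.im
          ≤ 2 * π * ((1 + π / (2 * Real.log 2)) * Real.log (1 + z.im)) :=
            mul_le_mul_of_nonneg_left hKle hπ
        _ = 2 * π * (1 + π / (2 * Real.log 2)) * Real.log (1 + z.im) := by ring
  · intro δ hδ
    obtain ⟨D, hD0, hDall⟩ := outer_delta hδ
    refine ⟨2 * π * D + 1, by positivity, ?_⟩
    intro z hz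
    obtain ⟨hKint, hKle⟩ := hDall z.im hz
    have hfun : (fun η : ℝ => (1 + η ^ 2) ^ (-1 - δ) * (2 * π * min η z.im))
        = fun η : ℝ => (2 * π) * ((1 + η ^ 2) ^ (-1 - δ) * min η z.im) := by
      funext η; ring
    have houter : IntegrableOn
        (fun η : ℝ => (1 + η ^ 2) ^ (-1 - δ) * (2 * π * min η z.im)) (Set.Ioi 0) := by
      rw [hfun]; exact hKint.const_mul _
    obtain ⟨hglueInt, hglueVal⟩ := fubini_glue z hz (fun η => (1 + η ^ 2) ^ (-1 - δ))
      wdelta_cont.measurable (fun η => by positivity) houter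
    refine ⟨hglueInt, ?_, ?_⟩
    · apply setIntegral_nonneg hSmeas
      intro p hp
      exact mul_nonneg (by positivity) (kernelK_nonneg hz (Set.mem_prod.mp hp).2)
    · rw [hglueVal, hfun, integral_const_mul]
      have hπ : (0:ℝ) ≤ 2 * π := by positivity
      have hyy : (0:ℝ) ≤ z.im / (1 + z.im) := by positivity
      have h1 : 2 * π * ∫ η in Set.Ioi (0:ℝ), (1 + η ^ 2) ^ (-1 - δ) * min η z.im
          ≤ 2 * π * (D * (z.im / (1 + z.im))) := mul_le_mul_of_nonneg_left hKle hπ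
      nlinarith
end

section
/- Let n be a positive integer such that m_{F_∞}(ζ) ≤ n for every zero ζ of F_∞ in Ȳ_1. Let δ_0>0 satisfy {ζ∈ℂ: dist(ζ,Ȳ_1)≤2δ_0}⊆Y, and for 0<δ<δ_0 set W_i(δ)={ζ∈Y_1: dist(ζ,Z(F_i))≥δ}. Then there exist C>0 and i_0 such that for every i≥i_0 and every 0<δ<δ_0, one has |F_i(ζ)| ≥ C·δ^n for all ζ∈W_i(δ). -/
set_option maxHeartbeats 1000000
open Metric Filter Set

lemma max_modulus {f : ℂ → ℂ} {a : ℂ} {R C : ℝ} (hR : 0 < R)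
    (hd : DifferentiableOn ℂ f (ball a R)) (hc : ContinuousOn f (closedBall a R))
    (hb : ∀ z ∈ sphere a R, ‖f z‖ ≤ C) :
    ∀ z ∈ closedBall a R, ‖f z‖ ≤ C := by
  intro z hz
  refine Complex.norm_le_of_forall_mem_frontier_norm_le isBounded_ball
    ⟨hd, hc.mono (by rw [closure_ball a hR.ne'])⟩ ?_ ?_
  · intro w hw
    rw [frontier_ball a hR.ne'] at hw
    exact hb w hw
  · rwa [closure_ball a hR.ne']

lemma min_modulus {f : ℂ → ℂ} {a : ℂ} {R ε : ℝ} (hR : 0 < R) (hε : 0 < ε)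
    (hd : DifferentiableOn ℂ f (ball a R))
    (hc : ContinuousOn f (closedBall a R))
    (hne : ∀ z ∈ closedBall a R, f z ≠ 0)
    (hb : ∀ z ∈ sphere a R, ε ≤ ‖f z‖) :
    ∀ z ∈ closedBall a R, ε ≤ ‖f z‖ := by
  have key : ∀ z ∈ closedBall a R, ‖(f z)⁻¹‖ ≤ ε⁻¹ := by
    refine max_modulus hR ?_ ?_ ?_
    · exact hd.inv fun x hx => hne x (ball_subset_closedBall hx)
    · exact hc.inv₀ hne
    · intro w hw
      rw [norm_inv]
      exact inv_anti₀ hε (hb w hw)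
  intro z hz
  have h0 : 0 < ‖f z‖ := norm_pos_iff.mpr (hne z hz)
  have := key z hz
  rw [norm_inv] at this
  exact (inv_le_inv₀ h0 hε).mp this

/-- Key local lemma, by induction on the order `m`. -/
lemma lemmaA : ∀ (m : ℕ) (U : Set ℂ) (f : ℂ → ℂ) (F : ℕ → ℂ → ℂ) (a : ℂ) (R δ₀ : ℝ),
    IsOpen U → DifferentiableOn ℂ f U → (∀ i, DifferentiableOn ℂ (F i) U) →
    TendstoLocallyUniformlyOn F f Filter.atTop U →
    0 < R → closedBall a R ⊆ U →
    (∀ z ∈ closedBall a R, z ≠ a → f z ≠ 0) →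
    (∃ φ : ℂ → ℂ, AnalyticAt ℂ φ a ∧ φ a ≠ 0 ∧ ∀ᶠ z in nhds a, f z = (z - a) ^ m * φ z) →
    0 < δ₀ →
    ∃ c : ℝ, 0 < c ∧ ∃ i₀ : ℕ, ∃ r : ℝ, 0 < r ∧ r ≤ R ∧ ∀ i ≥ i₀, ∀ δ : ℝ, 0 < δ → δ < δ₀ →
      ∀ ζ ∈ closedBall a r, (∀ w ∈ U, F i w = 0 → δ ≤ dist ζ w) → c * δ ^ m ≤ ‖F i ζ‖ := by
  classical
  intro m
  induction m with
  | zero =>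
    intro U f F a R δ₀ hU hf hF hconv hR hsub hnz hfac hδ₀
    obtain ⟨φ, hφa, hφ0, hfac⟩ := hfac
    have hfa : f a ≠ 0 := by
      have := hfac.self_of_nhds
      simpa using fun h => hφ0 (by simpa [h] using this.symm)
    have hne : ∀ z ∈ closedBall a R, f z ≠ 0 := by
      intro z hz
      by_cases hza : z = a
      · subst hza; exact hfa
      · exact hnz z hz hza
    -- minimum of ‖f‖ on the closed ball
    obtain ⟨x₀, hx₀, hx₀min⟩ := (isCompact_closedBall a R).exists_isMinOn
      ⟨a, mem_closedBall_self hR.le⟩ ((hf.continuousOn.mono hsub).norm)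
    set ε := ‖f x₀‖ with hε
    have hεpos : 0 < ε := norm_pos_iff.mpr (hne x₀ hx₀)
    have htu : TendstoUniformlyOn F f atTop (closedBall a R) :=
      (tendstoLocallyUniformlyOn_iff_forall_isCompact hU).mp hconv _ hsub (isCompact_closedBall a R)
    obtain ⟨i₀, hi₀⟩ := eventually_atTop.mp
      (Metric.tendstoUniformlyOn_iff.mp htu (ε/2) (by positivity))
    refine ⟨ε/2, by positivity, i₀, R, hR, le_refl _, ?_⟩
    intro i hi δ hδ hδδ₀ ζ hζ hzero
    have h1 : dist (f ζ) (F i ζ) < ε/2 := hi₀ i hi ζ hζ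
    have h2 : ε ≤ ‖f ζ‖ := hx₀min hζ
    have h3 : ‖f ζ‖ - ‖F i ζ‖ ≤ ‖f ζ - F i ζ‖ := norm_sub_norm_le _ _
    rw [dist_eq_norm] at h1
    simp only [pow_zero, mul_one]
    linarith
  | succ m ih =>
    intro U f F a R δ₀ hU hf hF hconv hR hsub hnz hfac hδ₀
    obtain ⟨φ, hφa, hφ0, hfac⟩ := hfac
    have haU : a ∈ U := hsub (mem_closedBall_self hR.le)
    have hfa : f a = 0 := by
      have := hfac.self_of_nhds
      simpa using this
    -- annulus min
    have hKcomp : IsCompact (closedBall a R \ ball a (R/4)) :=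
      (isCompact_closedBall a R).diff isOpen_ball
    have hKne : (closedBall a R \ ball a (R/4)).Nonempty := by
      refine ⟨a + R, ?_, ?_⟩
      · simp [mem_closedBall, Complex.dist_eq, abs_of_pos hR]
      · simp [mem_ball, Complex.dist_eq, abs_of_pos hR]
        linarith
    have hconts : ContinuousOn (fun z => ‖f z‖) (closedBall a R) :=
      (hf.continuousOn.mono hsub).norm
    obtain ⟨x₁, hx₁, hx₁min⟩ := hKcomp.exists_isMinOn hKne (hconts.mono diff_subset)
    set ε := ‖f x₁‖ with hεdef
    have hx₁a : x₁ ≠ a := by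
      intro h
      have : a ∈ ball a (R/4) := mem_ball_self (by linarith)
      rw [h] at hx₁
      exact hx₁.2 this
    have hεpos : 0 < ε := norm_pos_iff.mpr (hnz x₁ hx₁.1 hx₁a)
    -- uniform convergence on the closed ball
    have htu : TendstoUniformlyOn F f atTop (closedBall a R) :=
      (tendstoLocallyUniformlyOn_iff_forall_isCompact hU).mp hconv _ hsub (isCompact_closedBall a R)
    -- max of ‖f‖ on closed ball
    obtain ⟨y₁, hy₁, hy₁max⟩ := (isCompact_closedBall a R).exists_isMaxOn
      ⟨a, mem_closedBall_self hR.le⟩ hconts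
    set M := ‖f y₁‖ with hMdef
    have hM0 : 0 ≤ M := norm_nonneg _
    -- the chosen zeros
    set P : ℕ → Prop := fun i => ∃ z, z ∈ closedBall a (R/4) ∧ F i z = 0 with hPdef
    set zi : ℕ → ℂ := fun i => if h : P i then h.choose else a with hzidef
    have hzi_ball : ∀ i, zi i ∈ closedBall a (R/4) := by
      intro i
      simp only [hzidef]
      by_cases h : P i
      · rw [dif_pos h]; exact h.choose_spec.1
      · rw [dif_neg h]; exact mem_closedBall_self (by linarith)
    have hzi_zero : ∀ i, P i → F i (zi i) = 0 := by
      intro i h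
      simp only [hzidef]; simp only [dif_pos h]; exact h.choose_spec.2
    -- confinement of zeros
    have hconf : ∀ ρ : ℝ, 0 < ρ → ρ ≤ R/4 → ∀ᶠ i in atTop,
        ∀ z ∈ closedBall a (R/4), F i z = 0 → dist z a ≤ ρ := by
      intro ρ hρ hρR
      have hKρc : IsCompact (closedBall a (R/4) \ ball a ρ) :=
        (isCompact_closedBall _ _).diff isOpen_ball
      have hKρne : (closedBall a (R/4) \ ball a ρ).Nonempty := by
        refine ⟨a + ρ, ?_, ?_⟩
        · simp [mem_closedBall, Complex.dist_eq, abs_of_pos hρ, hρR]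
        · simp [mem_ball, Complex.dist_eq, abs_of_pos hρ]
      have hsub4 : closedBall a (R/4) \ ball a ρ ⊆ closedBall a R :=
        diff_subset.trans (closedBall_subset_closedBall (by linarith))
      obtain ⟨x₂, hx₂, hx₂min⟩ := hKρc.exists_isMinOn hKρne (hconts.mono hsub4)
      have hx₂a : x₂ ≠ a := by
        intro h
        have : a ∈ ball a ρ := mem_ball_self hρ
        rw [h] at hx₂
        exact hx₂.2 this
      have hε₂ : 0 < ‖f x₂‖ := norm_pos_iff.mpr (hnz x₂ (hsub4 hx₂) hx₂a)
      filter_upwards [Metric.tendstoUniformlyOn_iff.mp htu ‖f x₂‖ hε₂] with i hi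
      intro z hz hzz
      by_contra hcon
      push_neg at hcon
      have hzK : z ∈ closedBall a (R/4) \ ball a ρ := ⟨hz, by simp [mem_ball]; linarith⟩
      have := hi z (hsub4 hzK)
      rw [hzz, dist_eq_norm, sub_zero] at this
      exact absurd this (not_lt.mpr (hx₂min hzK))
    have hzi_small : ∀ ρ : ℝ, 0 < ρ → ∀ᶠ i in atTop, dist (zi i) a ≤ ρ := by
      intro ρ hρ
      have hρ' : 0 < min ρ (R/4) := lt_min hρ (by linarith)
      filter_upwards [hconf (min ρ (R/4)) hρ' (min_le_right _ _)] with i hi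
      simp only [hzidef]
      by_cases h : P i
      · rw [dif_pos h]
        exact le_trans (hi _ h.choose_spec.1 h.choose_spec.2) (min_le_left _ _)
      · rw [dif_neg h]; simp [hρ.le]
    -- dslope functions
    set g : ℕ → ℂ → ℂ := fun i => dslope (F i) (zi i) with hgdef
    set h : ℂ → ℂ := dslope f a with hhdef
    have hzi_ballR : ∀ i, zi i ∈ ball a R := fun i =>
      lt_of_le_of_lt (mem_closedBall.mp (hzi_ball i)) (by linarith)
    have hgd : ∀ i, DifferentiableOn ℂ (g i) (ball a R) := by
      intro i
      exact (Complex.differentiableOn_dslope (isOpen_ball.mem_nhds (hzi_ballR i))).mpr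
        ((hF i).mono (ball_subset_closedBall.trans hsub))
    have hhd : DifferentiableOn ℂ h (ball a R) :=
      (Complex.differentiableOn_dslope (isOpen_ball.mem_nhds (mem_ball_self hR))).mpr
        (hf.mono (ball_subset_closedBall.trans hsub))
    -- uniform convergence of g to h on closedBall a (R/2)
    have hhz : ∀ z : ℂ, z ≠ a → h z = f z / (z - a) := by
      intro z hza
      rw [hhdef, dslope_of_ne f hza, slope_def_field, hfa, sub_zero]
    have hcfa : ContinuousAt f a := (hf.differentiableAt (hU.mem_nhds haU)).continuousAt
    have htug : TendstoUniformlyOn g h atTop (closedBall a (R/2)) := by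
      rw [Metric.tendstoUniformlyOn_iff]
      intro ε' hε'
      set τ := (R/4) * ε' / 16 with hτdef
      have hτ : 0 < τ := by positivity
      obtain ⟨ρ₁, hρ₁, hρ₁f⟩ := Metric.continuousAt_iff.mp hcfa τ hτ
      set ρ := min (min (ρ₁/2) (R/4)) ((R/4)*(R/2)*ε' / (4*(M+1))) with hρdef
      have hρpos : 0 < ρ := by
        apply lt_min (lt_min (by linarith) (by linarith))
        positivity
      filter_upwards [Metric.tendstoUniformlyOn_iff.mp htu τ hτ, hzi_small ρ hρpos] with i hi1 hi2
      -- first, the bound on the sphere of radius R/2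
      have hsphere : ∀ z ∈ sphere a (R/2), ‖g i z - h z‖ ≤ ε'/2 := by
        intro z hz
        have hza' : dist z a = R/2 := mem_sphere.mp hz
        have hzia : dist (zi i) a ≤ R/4 := le_trans hi2 (le_trans (min_le_left _ _) (min_le_right _ _))
        have hzzi : R/4 ≤ dist z (zi i) := by
          have := dist_triangle z (zi i) a
          have h2 := abs_sub_abs_le_abs_sub (dist z a) (dist (zi i) a)
          linarith [dist_triangle z (zi i) a, dist_triangle_left z (zi i) a]
        have znei : z ≠ zi i := by
          intro hcon
          rw [hcon] at hza'
          have : dist (zi i) a ≤ R/4 := le_trans hi2 (le_trans (min_le_left _ _) (min_le_right _ _))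
          linarith [hza' ▸ this]
        have zna : z ≠ a := by
          intro hcon
          rw [hcon, dist_self] at hza'
          linarith
        have hz1 : z - zi i ≠ 0 := sub_ne_zero.mpr znei
        have hz2 : z - a ≠ 0 := sub_ne_zero.mpr zna
        have hg_eq : g i z = (F i z - F i (zi i)) / (z - zi i) := by
          rw [hgdef]
          simp only
          rw [dslope_of_ne (F i) znei, slope_def_field]
        have hh_eq : h z = f z / (z - a) := hhz z zna
        have hid : g i z - h z = (F i z - f z)/(z - zi i)
            + (f z * ((zi i) - a))/((z - zi i)*(z - a)) - F i (zi i)/(z - zi i) := by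
          rw [hg_eq, hh_eq]
          field_simp
          ring
        -- basic norm facts
        have hnzzi : (R/4 : ℝ) ≤ ‖z - zi i‖ := by rw [← dist_eq_norm]; exact hzzi
        have hnza : ‖z - a‖ = R/2 := by rw [← dist_eq_norm]; exact hza'
        have hρρ₁ : ρ ≤ ρ₁/2 := le_trans (min_le_left _ _) (min_le_left _ _)
        have hρM : ρ ≤ (R/4)*(R/2)*ε' / (4*(M+1)) := min_le_right _ _
        have hzcb : z ∈ closedBall a R := by
          rw [mem_closedBall, hza']; linarith
        have hzicb : zi i ∈ closedBall a R :=
          closedBall_subset_closedBall (by linarith) (hzi_ball i)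
        -- term 1
        have hT1 : ‖(F i z - f z)/(z - zi i)‖ ≤ ε'/16 := by
          have h1 : ‖F i z - f z‖ ≤ τ := by
            have := hi1 z hzcb
            rw [dist_eq_norm, norm_sub_rev] at this
            linarith
          rw [norm_div]
          have : ‖F i z - f z‖ / ‖z - zi i‖ ≤ τ / (R/4) :=
            div_le_div₀ (by positivity) h1 (by linarith) hnzzi
          calc ‖F i z - f z‖ / ‖z - zi i‖ ≤ τ / (R/4) := this
            _ = ε'/16 := by rw [hτdef]; field_simp [hR.ne']
        -- term 2
        have hT2 : ‖(f z * ((zi i) - a))/((z - zi i)*(z - a))‖ ≤ ε'/4 := by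
          rw [norm_div, norm_mul, norm_mul]
          have hfz : ‖f z‖ ≤ M := hy₁max hzcb
          have hzia' : ‖zi i - a‖ ≤ ρ := by rw [← dist_eq_norm]; exact hi2
          have hden : (R/4)*(R/2) ≤ ‖z - zi i‖ * ‖z - a‖ := by
            rw [hnza]
            apply mul_le_mul_of_nonneg_right hnzzi (by linarith)
          have hnum : ‖f z‖ * ‖zi i - a‖ ≤ M * ρ := by
            apply mul_le_mul hfz hzia' (norm_nonneg _) hM0
          have h2 : ‖f z‖ * ‖zi i - a‖ / (‖z - zi i‖ * ‖z - a‖) ≤ M * ρ / ((R/4)*(R/2)) :=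
            div_le_div₀ (by positivity) hnum (by positivity) hden
          have h3 : M * ρ / ((R/4)*(R/2)) ≤ ε'/4 := by
            rw [div_le_iff₀ (by positivity)]
            have h4 : M * ρ ≤ M * ((R/4)*(R/2)*ε' / (4*(M+1))) :=
              mul_le_mul_of_nonneg_left hρM hM0
            have h5 : M * ((R/4)*(R/2)*ε' / (4*(M+1))) ≤ ε' / 4 * (R / 4 * (R / 2)) := by
              rw [← mul_div_assoc, div_le_iff₀ (by positivity : (0:ℝ) < 4*(M+1))]
              nlinarith [mul_nonneg (mul_nonneg hε'.le (by linarith : (0:ℝ) ≤ R/4))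
                (by linarith : (0:ℝ) ≤ R/2)]
            linarith
          linarith
        -- term 3
        have hT3 : ‖F i (zi i)/(z - zi i)‖ ≤ ε'/8 := by
          have hfzi : ‖f (zi i)‖ ≤ τ := by
            have := hρ₁f (show dist (zi i) a < ρ₁ by linarith [hi2, hρρ₁, hρ₁])
            rw [hfa, dist_eq_norm, sub_zero] at this
            linarith
          have hFzi : ‖F i (zi i)‖ ≤ 2*τ := by
            have h6 := hi1 (zi i) hzicb
            rw [dist_eq_norm] at h6
            have h7 : ‖F i (zi i)‖ - ‖f (zi i)‖ ≤ ‖F i (zi i) - f (zi i)‖ := norm_sub_norm_le _ _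
            rw [norm_sub_rev] at h7
            linarith
          rw [norm_div]
          have : ‖F i (zi i)‖ / ‖z - zi i‖ ≤ 2*τ / (R/4) :=
            div_le_div₀ (by positivity) hFzi (by linarith) hnzzi
          calc ‖F i (zi i)‖ / ‖z - zi i‖ ≤ 2*τ / (R/4) := this
            _ = ε'/8 := by rw [hτdef]; field_simp [hR.ne']; ring
        calc ‖g i z - h z‖
            = ‖(F i z - f z)/(z - zi i) + (f z * ((zi i) - a))/((z - zi i)*(z - a))
              - F i (zi i)/(z - zi i)‖ := by rw [hid]
          _ ≤ ‖(F i z - f z)/(z - zi i) + (f z * ((zi i) - a))/((z - zi i)*(z - a))‖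
              + ‖F i (zi i)/(z - zi i)‖ := norm_sub_le _ _
          _ ≤ ‖(F i z - f z)/(z - zi i)‖ + ‖(f z * ((zi i) - a))/((z - zi i)*(z - a))‖
              + ‖F i (zi i)/(z - zi i)‖ := by linarith [norm_add_le ((F i z - f z)/(z - zi i)) ((f z * ((zi i) - a))/((z - zi i)*(z - a)))]
          _ ≤ ε'/16 + ε'/4 + ε'/8 := by linarith
          _ ≤ ε'/2 := by linarith

      -- extend to the closed ball by the maximum principle
      have hball := max_modulus (by linarith : (0:ℝ) < R/2)
        (((hgd i).sub hhd).mono (ball_subset_ball (by linarith)))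
        ((((hgd i).sub hhd).continuousOn).mono (closedBall_subset_ball (by linarith)))
        hsphere
      intro x hx
      rw [dist_eq_norm, norm_sub_rev]
      exact lt_of_le_of_lt (hball x hx) (by linarith)
        -- properties of h for the induction hypothesis
    have hh0 : ∀ z ∈ closedBall a (R/4), z ≠ a → h z ≠ 0 := by
      intro z hz hza
      rw [hhz z hza]
      exact div_ne_zero (hnz z (closedBall_subset_closedBall (by linarith) hz) hza)
        (sub_ne_zero.mpr hza)
    have hderiv : deriv f a = (a - a) ^ m * φ a := by
      have h1 : HasDerivAt (fun w : ℂ => (w - a) ^ (m+1))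
          ((((m:ℕ)+1 : ℕ) : ℂ) * (a - a) ^ m * 1) a := by
        simpa [Pi.pow_def] using (((hasDerivAt_id a).sub_const a).pow (m+1))
      have h2 : HasDerivAt φ (deriv φ a) a := hφa.differentiableAt.hasDerivAt
      have h3 := h1.mul h2
      have h4 : deriv f a = (((m:ℕ)+1 : ℕ) : ℂ) * (a - a) ^ m * 1 * φ a
          + (a - a) ^ (m+1) * deriv φ a := by
        rw [Filter.EventuallyEq.deriv_eq hfac]
        exact h3.deriv
      rcases m with _ | k
      · simpa using h4
      · rw [h4]
        simp [sub_self, zero_pow]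
    have hfach : ∀ᶠ z in nhds a, h z = (z - a) ^ m * φ z := by
      filter_upwards [hfac] with z hz
      by_cases hza : z = a
      · subst hza
        rw [hhdef, dslope_same]
        exact hderiv
      · rw [hhz z hza, hz, pow_succ]
        field_simp [sub_ne_zero.mpr hza]
    -- apply the induction hypothesis
    obtain ⟨c', hc', i₁, r', hr'0, hr'le, Hih⟩ := ih (ball a (R/2)) h g a (R/4) δ₀ isOpen_ball
      (hhd.mono (ball_subset_ball (by linarith)))
      (fun i => (hgd i).mono (ball_subset_ball (by linarith)))
      ((htug.tendstoLocallyUniformlyOn).mono ball_subset_closedBall)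
      (by linarith) (closedBall_subset_ball (by linarith)) hh0 ⟨φ, hφa, hφ0, hfach⟩ hδ₀
    obtain ⟨i₂, hi₂⟩ := eventually_atTop.mp
      (Metric.tendstoUniformlyOn_iff.mp htu (ε/2) (by positivity))
    refine ⟨c', hc', max i₁ i₂, r', hr'0, le_trans hr'le (by linarith), ?_⟩
    intro i hi δ hδ hδδ₀ ζ hζ hzero
    have hiE : ∀ x ∈ closedBall a R, dist (f x) (F i x) < ε/2 :=
      hi₂ i (le_trans (le_max_right _ _) hi)
    -- F i must have a zero in closedBall a (R/4)
    have hPi : P i := by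
      by_contra hnP
      have hnoz : ∀ x ∈ closedBall a R, F i x ≠ 0 := by
        intro x hx hFx
        by_cases hxb : x ∈ ball a (R/4)
        · exact hnP ⟨x, ball_subset_closedBall hxb, hFx⟩
        · have hxK : x ∈ closedBall a R \ ball a (R/4) := ⟨hx, hxb⟩
          have h5 : ε ≤ ‖f x‖ := hx₁min hxK
          have h6 := hiE x hx
          rw [hFx, dist_eq_norm, sub_zero] at h6
          linarith
      have hsph : ∀ x ∈ sphere a R, ε/2 ≤ ‖F i x‖ := by
        intro x hx
        have hxcb : x ∈ closedBall a R := sphere_subset_closedBall hx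
        have hxK : x ∈ closedBall a R \ ball a (R/4) := by
          refine ⟨hxcb, ?_⟩
          rw [mem_ball, mem_sphere.mp hx]
          linarith
        have h5 : ε ≤ ‖f x‖ := hx₁min hxK
        have h6 := hiE x hxcb
        rw [dist_eq_norm] at h6
        have h7 : ‖f x‖ - ‖F i x‖ ≤ ‖f x - F i x‖ := norm_sub_norm_le _ _
        linarith
      have hmin := min_modulus hR (by positivity : (0:ℝ) < ε/2)
        ((hF i).mono (ball_subset_closedBall.trans hsub))
        (((hF i).mono hsub).continuousOn) hnoz hsph a (mem_closedBall_self hR.le)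
      have h8 := hiE a (mem_closedBall_self hR.le)
      rw [hfa, dist_eq_norm, zero_sub, norm_neg] at h8
      linarith
    have hFzi : F i (zi i) = 0 := hzi_zero i hPi
    have hziU : zi i ∈ U := hsub (closedBall_subset_closedBall (by linarith) (hzi_ball i))
    have hδzi : δ ≤ dist ζ (zi i) := hzero _ hziU hFzi
    have hgih : c' * δ ^ m ≤ ‖g i ζ‖ := by
      refine Hih i (le_trans (le_max_left _ _) hi) δ hδ hδδ₀ ζ hζ ?_
      intro w hw hgw
      by_cases hwz : w = zi i
      · rw [hwz]; exact hδzi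
      · have hFw : F i w = 0 := by
          have h9 := hgw
          rw [hgdef] at h9
          simp only at h9
          rw [dslope_of_ne (F i) hwz, slope_def_field, hFzi, sub_zero] at h9
          rcases div_eq_zero_iff.mp h9 with h | h
          · exact h
          · exact absurd h (sub_ne_zero.mpr hwz)
        refine hzero w ?_ hFw
        exact hsub (ball_subset_closedBall (ball_subset_ball (by linarith) hw))
    have hkey : F i ζ = (ζ - zi i) * g i ζ := by
      have h10 := sub_smul_dslope (F i) (zi i) ζ
      rw [smul_eq_mul, hFzi, sub_zero] at h10
      rw [hgdef]
      exact h10.symm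
    calc c' * δ ^ (m+1) = δ * (c' * δ ^ m) := by ring
      _ ≤ dist ζ (zi i) * ‖g i ζ‖ := mul_le_mul hδzi hgih (by positivity) dist_nonneg
      _ = ‖F i ζ‖ := by rw [hkey, norm_mul, ← dist_eq_norm]

/-- `G` has a zero of order exactly `m` at `ζ`. -/
def zeroOrder (G : ℂ → ℂ) (ζ : ℂ) (m : ℕ) : Prop :=
  ∃ g : ℂ → ℂ, AnalyticAt ℂ g ζ ∧ g ζ ≠ 0 ∧ ∀ᶠ w in nhds ζ, G w = (w - ζ) ^ m * g w

/-- a uniform lower bound for `|F_i|` away from the zero set. -/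
theorem lower_bound_away_from_zeros
    (Y Y₁ : Set ℂ) (hY : IsOpen Y) (hYconn : IsConnected Y)
    (hY₁ : IsOpen Y₁) (hY₁c : IsCompact (closure Y₁)) (hY₁Y : closure Y₁ ⊆ Y)
    (F : ℕ → ℂ → ℂ) (hF : ∀ i, DifferentiableOn ℂ (F i) Y)
    (Flim : ℂ → ℂ) (hFlim : DifferentiableOn ℂ Flim Y)
    (hconv : TendstoLocallyUniformlyOn F Flim Filter.atTop Y)
    (hne : ∃ z ∈ Y, Flim z ≠ 0)
    (n : ℕ) (hn : 0 < n)
    (hord : ∀ ζ ∈ closure Y₁, ∀ m : ℕ, zeroOrder Flim ζ m → m ≤ n)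
    (δ₀ : ℝ) (hδ₀ : 0 < δ₀)
    (hthick : ∀ ζ : ℂ, ∀ w ∈ closure Y₁, dist ζ w ≤ 2 * δ₀ → ζ ∈ Y) :
    ∃ C : ℝ, 0 < C ∧ ∃ i₀ : ℕ, ∀ i ≥ i₀, ∀ δ : ℝ, 0 < δ → δ < δ₀ →
      ∀ ζ ∈ Y₁, (∀ w ∈ Y, F i w = 0 → δ ≤ dist ζ w) →
        C * δ ^ n ≤ ‖F i ζ‖ := by
  classical
  by_cases hY₁ne : Y₁.Nonempty
  swap
  · exact ⟨1, one_pos, 0, fun i _ δ _ _ ζ hζ _ => absurd ⟨ζ, hζ⟩ hY₁ne⟩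
  have hYan : AnalyticOnNhd ℂ Flim Y := hFlim.analyticOnNhd hY
  have key : ∀ a ∈ closure Y₁, ∃ c : ℝ, 0 < c ∧ ∃ i₀ : ℕ, ∃ r : ℝ, 0 < r ∧ ∃ m : ℕ, m ≤ n ∧
      ∀ i ≥ i₀, ∀ δ : ℝ, 0 < δ → δ < δ₀ → ∀ ζ ∈ closedBall a r,
        (∀ w ∈ Y, F i w = 0 → δ ≤ dist ζ w) → c * δ ^ m ≤ ‖F i ζ‖ := by
    intro a ha
    have haY : a ∈ Y := hY₁Y ha
    have hana : AnalyticAt ℂ Flim a := hYan a haY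
    have hnot : ¬ ∀ᶠ z in nhds a, Flim z = 0 := by
      intro hev
      obtain ⟨z, hzY, hz0⟩ := hne
      exact hz0 (hYan.eqOn_zero_of_preconnected_of_eventuallyEq_zero
        hYconn.isPreconnected haY hev hzY)
    have hord_ne : analyticOrderAt Flim a ≠ ⊤ := by
      simp only [ne_eq, analyticOrderAt_eq_top]
      exact hnot
    set m := (analyticOrderAt Flim a).toNat with hmdef
    have hordm : analyticOrderAt Flim a = (m : ℕ∞) := (ENat.coe_toNat hord_ne).symm
    obtain ⟨φ, hφa, hφ0, hfac⟩ := hana.analyticOrderAt_eq_natCast.mp hordm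
    have hfac' : ∀ᶠ z in nhds a, Flim z = (z - a) ^ m * φ z := by
      filter_upwards [hfac] with z hz
      rw [hz, smul_eq_mul]
    have hmn : m ≤ n := hord a ha m ⟨φ, hφa, hφ0, hfac'⟩
    have hφne : ∀ᶠ z in nhds a, φ z ≠ 0 := hφa.continuousAt.eventually_ne hφ0
    have hev : ∀ᶠ z in nhds a, (z ≠ a → Flim z ≠ 0) := by
      filter_upwards [hfac', hφne] with z h1 h2 hza
      rw [h1]
      exact mul_ne_zero (pow_ne_zero _ (sub_ne_zero.mpr hza)) h2
    obtain ⟨ρ, hρ, hball⟩ := Metric.eventually_nhds_iff_ball.mp hev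
    obtain ⟨ρ', hρ', hball'⟩ := Metric.nhds_basis_closedBall.mem_iff.mp (hY.mem_nhds haY)
    set R := min (ρ/2) ρ' with hRdef
    have hR : 0 < R := lt_min (by linarith) hρ'
    have hRY : closedBall a R ⊆ Y :=
      (closedBall_subset_closedBall (min_le_right _ _)).trans hball'
    have hRnz : ∀ z ∈ closedBall a R, z ≠ a → Flim z ≠ 0 := by
      intro z hz hza
      refine hball z ?_ hza
      rw [mem_ball]
      calc dist z a ≤ R := mem_closedBall.mp hz
        _ ≤ ρ/2 := min_le_left _ _
        _ < ρ := by linarith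
    obtain ⟨c, hc, i₀, r, hr0, hrle, H⟩ := lemmaA m Y Flim F a R δ₀ hY hFlim hF hconv
      hR hRY hRnz ⟨φ, hφa, hφ0, hfac'⟩ hδ₀
    exact ⟨c, hc, i₀, r, hr0, m, hmn, H⟩
  choose! c hc i₀f r hr mf hmn H using key
  have hcover : closure Y₁ ⊆ ⋃ a ∈ closure Y₁, ball a (r a) :=
    fun x hx => Set.mem_biUnion hx (mem_ball_self (hr x hx))
  obtain ⟨t, htsub, htfin, htcov⟩ := hY₁c.elim_finite_subcover_image
    (fun a _ => isOpen_ball) hcover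
  obtain ⟨ζ₀, hζ₀⟩ := hY₁ne
  have hζ₀t : ∃ a ∈ t, ζ₀ ∈ ball a (r a) := by
    have := htcov (subset_closure hζ₀)
    simpa using this
  set s := htfin.toFinset with hsdef
  have hsne : s.Nonempty := by
    obtain ⟨a, hat, _⟩ := hζ₀t
    exact ⟨a, htfin.mem_toFinset.mpr hat⟩
  set C₀ := s.inf' hsne c with hC₀def
  have hC₀ : 0 < C₀ := by
    rw [hC₀def, Finset.lt_inf'_iff]
    intro a has
    exact hc a (htsub (htfin.mem_toFinset.mp has))
  have hmax1 : (1:ℝ) ≤ max 1 δ₀ := le_max_left _ _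
  refine ⟨C₀ / (max 1 δ₀)^n, by positivity, s.sup i₀f, ?_⟩
  intro i hi δ hδ hδδ₀ ζ hζ hzero
  have hζcov := htcov (subset_closure hζ)
  simp only [Set.mem_iUnion] at hζcov
  obtain ⟨a, hat, hζa⟩ := hζcov
  have hacl : a ∈ closure Y₁ := htsub hat
  have has : a ∈ s := htfin.mem_toFinset.mpr hat
  have hbound := H a hacl i (le_trans (Finset.le_sup has) hi) δ hδ hδδ₀ ζ
    (ball_subset_closedBall hζa) hzero
  have hman : mf a ≤ n := hmn a hacl
  have hδmax : δ ≤ max 1 δ₀ := le_trans hδδ₀.le (le_max_right _ _)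
  have hpow : δ ^ n ≤ δ ^ (mf a) * (max 1 δ₀)^n := by
    have heq : δ^n = δ^(mf a) * δ^(n - mf a) := by
      rw [← pow_add]
      congr 1
      omega
    rw [heq]
    apply mul_le_mul_of_nonneg_left ?_ (by positivity)
    calc δ^(n - mf a) ≤ (max 1 δ₀)^(n - mf a) := pow_le_pow_left₀ hδ.le hδmax _
      _ ≤ (max 1 δ₀)^n := pow_le_pow_right₀ hmax1 (by omega)
  have hCa : C₀ ≤ c a := Finset.inf'_le _ has
  have hmaxpos : (0:ℝ) < (max 1 δ₀)^n := by positivity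
  calc C₀ / (max 1 δ₀)^n * δ^n ≤ (c a / (max 1 δ₀)^n) * (δ^(mf a) * (max 1 δ₀)^n) := by
        apply mul_le_mul (by gcongr) hpow (by positivity)
          (le_of_lt (div_pos (hc a hacl) hmaxpos))
    _ = c a * δ^(mf a) := by
        field_simp
    _ ≤ ‖F i ζ‖ := hbound
end

section
/- Let U⊆ℂ be an open neighbourhood of 0, let α: U→ℂ be a nowhere-vanishing holomorphic function, and let m and r be positive integers. Then there exist an open neighbourhood U_1⊆U of 0 and a holomorphic function ζ on U_1 with ζ(0)=0 and ζ'(0)=1 such that ζ(z)^{m−r}·ζ'(z)^r·α(0) = z^{m−r}·α(z) for all z∈U_1∖{0} (equivalently, α(0)·ζ^m·(dζ/ζ)^r = z^m·α·(dz/z)^r as meromorphic r-differentials). Moreover the germ of ζ at 0 with these properties is unique. -/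
set_option maxHeartbeats 1000000

open Complex Metric Filter Topology

lemma radius_mono {p q : FormalMultilinearSeries ℂ ℂ ℂ}
    (h : ∀ n, ‖q n‖ ≤ ‖p n‖) : p.radius ≤ q.radius := by
  refine ENNReal.le_of_forall_nnreal_lt fun ρ hρ => ?_
  obtain ⟨C, hC, hb⟩ := p.norm_mul_pow_le_of_lt_radius hρ
  refine q.le_radius_of_bound C fun n => le_trans ?_ (hb n)
  have : (0:ℝ) ≤ (ρ:ℝ)^n := by positivity
  exact mul_le_mul_of_nonneg_right (h n) this

lemma exists_psi (γ : ℂ → ℂ) (hγ : AnalyticAt ℂ γ 0) (m r : ℕ) (hm : 0 < m) (hr : 0 < r) :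
    ∃ ψ : ℂ → ℂ, AnalyticAt ℂ ψ 0 ∧ ψ 0 = γ 0 ∧
      ∀ᶠ z in 𝓝 (0:ℂ), (m:ℂ) * ψ z + r * (z * deriv ψ z) = m * γ z := by
  obtain ⟨p, hp⟩ := hγ
  obtain ⟨ε, hpε⟩ := hp
  set c : ℕ → ℂ := fun n => (((m:ℝ) / ((m:ℝ) + r * n) : ℝ) : ℂ) with hc
  have hden : ∀ n : ℕ, (0:ℝ) < (m:ℝ) + r * n := by
    intro n; positivity
  set q : FormalMultilinearSeries ℂ ℂ ℂ := fun n => c n • p n with hq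
  have hqn : ∀ n, ‖q n‖ ≤ ‖p n‖ := by
    intro n
    show ‖c n • p n‖ ≤ ‖p n‖
    rw [norm_smul (c n) (p n)]
    have : ‖c n‖ ≤ 1 := by
      rw [hc]
      simp only [Complex.norm_real, Real.norm_eq_abs]
      rw [abs_div]
      rw [div_le_one (by rw [_root_.abs_of_pos (hden n)]; exact hden n)]
      rw [_root_.abs_of_nonneg (by positivity : (0:ℝ) ≤ (m:ℝ)), _root_.abs_of_pos (hden n)]
      have : (0:ℝ) ≤ (r:ℝ) * n := by positivity
      linarith
    nlinarith [norm_nonneg (p n), norm_nonneg (c n)]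
  have hrad : ε ≤ q.radius := hpε.r_le.trans (radius_mono hqn)
  have hψb : HasFPowerSeriesOnBall q.sum q 0 ε :=
    (q.hasFPowerSeriesOnBall (lt_of_lt_of_le hpε.r_pos hrad)).mono hpε.r_pos hrad
  refine ⟨q.sum, hψb.analyticAt, ?_, ?_⟩
  · have h1 : q.coeff 0 = q.sum 0 := by
      simpa using hψb.coeff_zero 1
    have h2 : p.coeff 0 = γ 0 := by
      simpa using hpε.coeff_zero 1
    rw [← h1, ← h2]
    simp only [FormalMultilinearSeries.coeff, hq]
    rw [ContinuousMultilinearMap.smul_apply, hc]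
    simp only [smul_eq_mul]
    have hmne : ((m:ℝ)) ≠ 0 := Nat.cast_ne_zero.mpr hm.ne'
    have hone : (((m:ℝ) / ((m:ℝ) + (r:ℝ) * ((0:ℕ):ℝ)) : ℝ) : ℂ) = 1 := by
      norm_num [div_self hmne]
    rw [hone, one_mul]
  · have hball : EMetric.ball (0:ℂ) ε ∈ 𝓝 (0:ℂ) := EMetric.ball_mem_nhds _ hpε.r_pos
    filter_upwards [hball] with z hz
    have hz' : (0:ℂ) + z ∈ EMetric.ball (0:ℂ) ε := by simpa using hz
    have hs1 : HasSum (fun n => p n fun _ => z) (γ z) := by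
      simpa using hpε.hasSum (by simpa using hz : z ∈ EMetric.ball (0:ℂ) ε)
    have hs2 : HasSum (fun n => q n fun _ => z) (q.sum z) := by
      simpa using hψb.hasSum (by simpa using hz : z ∈ EMetric.ball (0:ℂ) ε)
    have hs3 : HasSum (fun n => q.derivSeries n fun _ => z) (fderiv ℂ q.sum z) := by
      simpa using hψb.fderiv.hasSum (by simpa using hz : z ∈ EMetric.ball (0:ℂ) ε)
    have hs4 := (ContinuousLinearMap.apply ℂ ℂ z).hasSum hs3
    simp only [ContinuousLinearMap.apply_apply] at hs4
    have hfd : fderiv ℂ q.sum z z = z * deriv q.sum z := by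
      have h' : fderiv ℂ q.sum z z = fderiv ℂ q.sum z (z • 1) := by norm_num
      rw [h', map_smul, smul_eq_mul, fderiv_apply_one_eq_deriv]
    set F : ℕ → ℂ := fun n => (n:ℂ) * (q n fun _ => z) with hF
    have hEq : (fun n => (q.derivSeries n fun _ => z) z) = fun n => F (n + 1) := by
      funext n
      rw [FormalMultilinearSeries.derivSeries_apply_diag]
      simp only [hF, nsmul_eq_mul]
      all_goals push_cast
      all_goals ring
    rw [hEq, hfd] at hs4
    have hs5 : HasSum (fun n => F (n + 1)) (z * deriv q.sum z) := hs4
    have hF0 : F 0 = 0 := by simp [hF]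
    have hs6 : HasSum F (z * deriv q.sum z) := by
      have := (hasSum_nat_add_iff (f := F) 1).mp hs5
      simpa [hF0] using this
    have hs7 : HasSum (fun n => (m:ℂ) * (q n fun _ => z) + (r:ℂ) * F n)
        ((m:ℂ) * q.sum z + (r:ℂ) * (z * deriv q.sum z)) :=
      (hs2.mul_left _).add (hs6.mul_left _)
    have hs8 : HasSum (fun n => (m:ℂ) * (p n fun _ => z)) ((m:ℂ) * γ z) :=
      hs1.mul_left _
    have hterm : ∀ n, (m:ℂ) * (q n fun _ => z) + (r:ℂ) * F n = (m:ℂ) * (p n fun _ => z) := by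
      intro n
      rw [hF, hq]
      simp only [ContinuousMultilinearMap.smul_apply, smul_eq_mul, hc]
      have hne : ((m:ℝ) + r * n) ≠ 0 := ne_of_gt (hden n)
      have hneC : ((m:ℂ) + (r:ℂ) * (n:ℂ)) ≠ 0 := by
        exact_mod_cast Complex.ofReal_ne_zero.mpr (ne_of_gt (hden n))
      have : ((((m:ℝ) / ((m:ℝ) + r * n) : ℝ)) : ℂ) * ((m:ℂ) + r * n) = (m:ℂ) := by
        push_cast
        field_simp
      linear_combination (p n fun _ => z) * this
    have hs7' : HasSum (fun n => (m:ℂ) * (p n fun _ => z))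
        ((m:ℂ) * q.sum z + (r:ℂ) * (z * deriv q.sum z)) := by
      rw [show (fun n => (m:ℂ) * (p n fun _ => z)) = fun n => (m:ℂ) * (q n fun _ => z) + (r:ℂ) * F n from funext fun n => (hterm n).symm]
      exact hs7
    exact hs7'.unique hs8


lemma const_of_deriv_zero_ball {f : ℂ → ℂ} {ρ : ℝ}
    (hf : ∀ z ∈ ball (0:ℂ) ρ, DifferentiableAt ℂ f z)
    (h0 : ∀ z ∈ ball (0:ℂ) ρ, deriv f z = 0) :
    ∀ z ∈ ball (0:ℂ) ρ, f z = f 0 := by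
  intro z hz
  have hball : Convex ℝ (ball (0:ℂ) ρ) := convex_ball 0 ρ
  have h0' : (0:ℂ) ∈ ball (0:ℂ) ρ := by
    rw [mem_ball] at hz ⊢
    simpa using lt_of_le_of_lt (by simp) hz
  refine hball.is_const_of_fderivWithin_eq_zero
    (fun w hw => (hf w hw).differentiableWithinAt) (fun w hw => ?_) hz h0'
  rw [fderivWithin_of_isOpen isOpen_ball hw]
  ext
  rw [fderiv_apply_one_eq_deriv, h0 w hw]
  simp

lemma psi_unique {ρ : ℝ} (ψ₁ ψ₂ γ : ℂ → ℂ) (m r : ℕ) (hm : 0 < m) (hr : 0 < r)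
    (h₁ : ∀ z ∈ ball (0:ℂ) ρ, DifferentiableAt ℂ ψ₁ z)
    (h₂ : ∀ z ∈ ball (0:ℂ) ρ, DifferentiableAt ℂ ψ₂ z)
    (e₁ : ∀ z ∈ ball (0:ℂ) ρ, (m:ℂ) * ψ₁ z + r * (z * deriv ψ₁ z) = m * γ z)
    (e₂ : ∀ z ∈ ball (0:ℂ) ρ, (m:ℂ) * ψ₂ z + r * (z * deriv ψ₂ z) = m * γ z) :
    Set.EqOn ψ₁ ψ₂ (ball (0:ℂ) ρ) := by
  obtain ⟨m', rfl⟩ : ∃ m', m = m' + 1 := ⟨m - 1, (Nat.succ_pred_eq_of_pos hm).symm⟩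
  obtain ⟨r', rfl⟩ : ∃ r', r = r' + 1 := ⟨r - 1, (Nat.succ_pred_eq_of_pos hr).symm⟩
  intro z hz
  have h0' : (0:ℂ) ∈ ball (0:ℂ) ρ := by
    rw [mem_ball] at hz ⊢
    simpa using lt_of_le_of_lt (by simp) hz
  set δ : ℂ → ℂ := fun w => ψ₁ w - ψ₂ w with hδ
  have hδ0 : δ 0 = 0 := by
    have t₁ := e₁ 0 h0'
    have t₂ := e₂ 0 h0'
    simp only [zero_mul, mul_zero, add_zero] at t₁ t₂
    have hmne : ((m' + 1 : ℕ) : ℂ) ≠ 0 := Nat.cast_ne_zero.mpr (Nat.succ_ne_zero m')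
    have hh1 : ψ₁ 0 = γ 0 := mul_left_cancel₀ hmne t₁
    have hh2 : ψ₂ 0 = γ 0 := mul_left_cancel₀ hmne t₂
    simp [hδ, hh1, hh2]
  have hδdiff : ∀ w ∈ ball (0:ℂ) ρ, HasDerivAt δ (deriv ψ₁ w - deriv ψ₂ w) w := fun w hw =>
    ((h₁ w hw).hasDerivAt).sub ((h₂ w hw).hasDerivAt)
  set E : ℂ → ℂ := fun w => w ^ (m' + 1) * (δ w) ^ (r' + 1) with hE
  have hEderiv : ∀ w ∈ ball (0:ℂ) ρ, HasDerivAt E (((m' + 1 : ℕ):ℂ) * w ^ m' * (δ w) ^ (r' + 1)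
      + w ^ (m' + 1) * (((r' + 1 : ℕ):ℂ) * (δ w) ^ r' * (deriv ψ₁ w - deriv ψ₂ w))) w := by
    intro w hw
    have hp : HasDerivAt (fun x : ℂ => x ^ (m' + 1)) (((m' + 1 : ℕ):ℂ) * w ^ m') w := by
      simpa using hasDerivAt_pow (m' + 1) w
    exact hp.mul ((hδdiff w hw).pow (r' + 1) |>.congr_deriv (by norm_num))
  have hEzero : ∀ w ∈ ball (0:ℂ) ρ, deriv E w = 0 := by
    intro w hw
    rw [(hEderiv w hw).deriv]
    have hδd : deriv δ w = deriv ψ₁ w - deriv ψ₂ w := (hδdiff w hw).deriv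
    have hODE : ((m' + 1 : ℕ):ℂ) * δ w + ((r' + 1 : ℕ):ℂ) * (w * (deriv ψ₁ w - deriv ψ₂ w)) = 0 := by
      have t₁ := e₁ w hw
      have t₂ := e₂ w hw
      simp only [hδ]
      push_cast at t₁ t₂ ⊢
      ring_nf
      ring_nf at t₁ t₂
      linear_combination t₁ - t₂
    push_cast at hODE ⊢
    linear_combination (w ^ m' * (δ w) ^ r') * hODE
  have hconst := const_of_deriv_zero_ball
    (fun w hw => (hEderiv w hw).differentiableAt) hEzero
  have hE0 : E 0 = 0 := by simp [hE]
  have : E z = 0 := (hconst z hz).trans hE0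
  rcases eq_or_ne z 0 with rfl | hzne
  · simpa [hδ, sub_eq_zero] using hδ0
  · have hzm : z ^ (m' + 1) ≠ 0 := pow_ne_zero _ hzne
    have : (δ z) ^ (r' + 1) = 0 := by
      rcases mul_eq_zero.mp this with h | h
      · exact absurd h hzm
      · exact h
    have := pow_eq_zero_iff (Nat.succ_ne_zero r') |>.mp this
    simpa [hδ, sub_eq_zero] using this


lemma analyticAt_deriv' {f : ℂ → ℂ} {z : ℂ} (h : AnalyticAt ℂ f z) :
    AnalyticAt ℂ (deriv f) z := by
  have hA : AnalyticOnNhd ℂ f {w | AnalyticAt ℂ f w} := fun w hw => hw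
  exact hA.deriv z h


lemma recover (U₁ : Set ℂ) (hU₁ : IsOpen U₁) (h0 : (0:ℂ) ∈ U₁) (ζ : ℂ → ℂ)
    (hζd : DifferentiableOn ℂ ζ U₁) (hζ0 : ζ 0 = 0) (hζ'0 : deriv ζ 0 = 1)
    (γ : ℂ → ℂ) (hγan : ∀ᶠ z in 𝓝 (0:ℂ), AnalyticAt ℂ γ z) (hγ0 : γ 0 = 1)
    (hγne : ∀ z, γ z ≠ 0)
    (m r : ℕ) (hm : 0 < m) (hr : 0 < r)
    (heq : ∀ z ∈ U₁, z ≠ 0 → ζ z ^ ((m:ℤ) - r) * (deriv ζ z) ^ r = z ^ ((m:ℤ) - r) * γ z ^ r) :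
    ∃ ρ > 0, ∀ z ∈ ball (0:ℂ) ρ,
      (ζ z = z * Complex.exp (((r:ℂ)/m) *
        Complex.log (Complex.exp (((m:ℂ)/r) * Complex.log (dslope ζ 0 z))))) ∧
      AnalyticAt ℂ (fun w => Complex.exp (((m:ℂ)/r) * Complex.log (dslope ζ 0 w))) z ∧
      ((m:ℂ) * Complex.exp (((m:ℂ)/r) * Complex.log (dslope ζ 0 z))
        + r * (z * deriv (fun w => Complex.exp (((m:ℂ)/r) * Complex.log (dslope ζ 0 w))) z)
        = m * γ z) := by
  have hmne : ((m:ℂ)) ≠ 0 := Nat.cast_ne_zero.mpr hm.ne'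
  have hrne : ((r:ℂ)) ≠ 0 := Nat.cast_ne_zero.mpr hr.ne'
  have hmne' : ((m:ℝ)) ≠ 0 := Nat.cast_ne_zero.mpr hm.ne'
  have hrne' : ((r:ℝ)) ≠ 0 := Nat.cast_ne_zero.mpr hr.ne'
  set h : ℂ → ℂ := dslope ζ 0 with hh
  have hζan : AnalyticAt ℂ ζ 0 := hζd.analyticAt (hU₁.mem_nhds h0)
  obtain ⟨p, hp⟩ := hζan
  have hhan : AnalyticAt ℂ h 0 := ⟨_, hp.has_fpower_series_dslope_fslope⟩
  have hh0 : h 0 = 1 := by rw [hh, dslope_same]; exact hζ'0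
  -- eventual properties
  have ev1 : ∀ᶠ z in 𝓝 (0:ℂ), AnalyticAt ℂ h z := hhan.eventually_analyticAt
  have htend : Filter.Tendsto h (𝓝 0) (𝓝 1) := by
    have := hhan.continuousAt; rwa [ContinuousAt, hh0] at this
  have ev2 : ∀ᶠ z in 𝓝 (0:ℂ), ‖h z - 1‖ < 1/2 := by
    have : ∀ᶠ y in 𝓝 (1:ℂ), ‖y - 1‖ < 1/2 := by
      have : Metric.ball (1:ℂ) (1/2) ∈ 𝓝 (1:ℂ) := Metric.ball_mem_nhds _ (by norm_num)
      filter_upwards [this] with y hy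
      simpa [dist_eq_norm] using hy
    exact htend.eventually this
  set b : ℝ := Real.pi * r / (2 * m) with hb
  have hbpos : 0 < b := by
    rw [hb]; positivity
  have ev3 : ∀ᶠ z in 𝓝 (0:ℂ), ‖Complex.log (h z)‖ < b := by
    have hcont : ContinuousAt (fun z => Complex.log (h z)) 0 :=
      (hhan.clog (by rw [hh0]; exact Complex.one_mem_slitPlane)).continuousAt
    have hval : Complex.log (h 0) = 0 := by rw [hh0, Complex.log_one]
    have : Filter.Tendsto (fun z => Complex.log (h z)) (𝓝 0) (𝓝 0) := by
      have := hcont; rwa [ContinuousAt, hval] at this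
    have hb' : ∀ᶠ y in 𝓝 (0:ℂ), ‖y‖ < b := by
      have : Metric.ball (0:ℂ) b ∈ 𝓝 (0:ℂ) := Metric.ball_mem_nhds _ hbpos
      filter_upwards [this] with y hy
      simpa [dist_eq_norm] using hy
    exact this.eventually hb'
  have ev4 : ∀ᶠ z in 𝓝 (0:ℂ), z ∈ U₁ := hU₁.mem_nhds h0
  obtain ⟨ρ, hρpos, hball⟩ := Metric.eventually_nhds_iff_ball.mp
    (ev1.and (ev2.and (ev3.and (ev4.and hγan))))
  refine ⟨ρ, hρpos, ?_⟩
  have hA : ∀ z ∈ ball (0:ℂ) ρ, AnalyticAt ℂ h z := fun z hz => (hball z hz).1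
  have hB : ∀ z ∈ ball (0:ℂ) ρ, ‖h z - 1‖ < 1/2 := fun z hz => (hball z hz).2.1
  have hC : ∀ z ∈ ball (0:ℂ) ρ, ‖Complex.log (h z)‖ < b := fun z hz => (hball z hz).2.2.1
  have hD : ∀ z ∈ ball (0:ℂ) ρ, z ∈ U₁ := fun z hz => (hball z hz).2.2.2.1
  have hγA : ∀ z ∈ ball (0:ℂ) ρ, AnalyticAt ℂ γ z := fun z hz => (hball z hz).2.2.2.2
  have hS : ∀ z ∈ ball (0:ℂ) ρ, h z ∈ slitPlane := by
    intro z hz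
    rw [Complex.mem_slitPlane_iff]
    left
    have := hB z hz
    have h1 : |(h z - 1).re| ≤ ‖h z - 1‖ := Complex.abs_re_le_norm _
    have h2 : (h z - 1).re = (h z).re - 1 := by simp
    rw [h2] at h1
    cases (abs_le.mp h1) with
    | intro hl hr => linarith
  have hne : ∀ z ∈ ball (0:ℂ) ρ, h z ≠ 0 := fun z hz => slitPlane_ne_zero (hS z hz)
  -- ζ z = z * h z
  have fact_zh : ∀ z ∈ ball (0:ℂ) ρ, ζ z = z * h z := by
    intro z hz
    rcases eq_or_ne z 0 with rfl | hzne
    · simp [hζ0]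
    · rw [hh, dslope_of_ne _ hzne, slope_def_field]
      field_simp [hζ0]
      rw [hζ0]; ring
  -- deriv ζ
  have fact_dζ : ∀ z ∈ ball (0:ℂ) ρ, deriv ζ z = h z + z * deriv h z := by
    intro z hz
    have hev : ζ =ᶠ[𝓝 z] fun w => w * h w := by
      filter_upwards [isOpen_ball.mem_nhds hz] with w hw
      exact fact_zh w hw
    rw [hev.deriv_eq]
    have hder : HasDerivAt (fun w => w * h w) (1 * h z + z * deriv h z) z :=
      (hasDerivAt_id z).mul ((hA z hz).differentiableAt.hasDerivAt)
    rw [hder.deriv]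
    ring
  set ψ : ℂ → ℂ := fun w => Complex.exp (((m:ℂ)/r) * Complex.log (h w)) with hψ
  have ψan : ∀ z ∈ ball (0:ℂ) ρ, AnalyticAt ℂ ψ z := fun z hz =>
    (analyticAt_const.mul ((hA z hz).clog (hS z hz))).cexp
  have ψ0 : ψ 0 = 1 := by
    rw [hψ]
    simp only [hh0, Complex.log_one, mul_zero, Complex.exp_zero]
  have ψne : ∀ z, ψ z ≠ 0 := fun z => Complex.exp_ne_zero _
  have ψpow : ∀ z ∈ ball (0:ℂ) ρ, ψ z ^ r = h z ^ m := by
    intro z hz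
    rw [hψ]
    rw [← Complex.exp_nat_mul]
    have : (r:ℂ) * (((m:ℂ)/r) * Complex.log (h z)) = (m:ℂ) * Complex.log (h z) := by
      field_simp
    rw [this, Complex.exp_nat_mul, Complex.exp_log (hne z hz)]
  have ψderiv : ∀ z ∈ ball (0:ℂ) ρ, HasDerivAt ψ (ψ z * (((m:ℂ)/r) * (deriv h z / h z))) z := by
    intro z hz
    have hhd : HasDerivAt h (deriv h z) z := (hA z hz).differentiableAt.hasDerivAt
    have hl : HasDerivAt (fun w => Complex.log (h w)) (deriv h z / h z) z :=
      hhd.clog (hS z hz)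
    have := (hl.const_mul (((m:ℂ)/r))).cexp
    simpa [hψ, mul_comm] using this
  -- key identity from heq
  have keyA : ∀ z ∈ ball (0:ℂ) ρ, z ≠ 0 →
      h z ^ m * (h z + z * deriv h z) ^ r = γ z ^ r * h z ^ r := by
    intro z hz hzne
    have e := heq z (hD z hz) hzne
    rw [fact_zh z hz, fact_dζ z hz, mul_zpow] at e
    have hcan : z ^ ((m:ℤ) - r) ≠ 0 := zpow_ne_zero _ hzne
    have e2 : h z ^ ((m:ℤ) - r) * (h z + z * deriv h z) ^ r = γ z ^ r := by
      have := e
      field_simp at this ⊢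
      -- rearrange: z^(m-r) * h^(m-r) * Y^r = z^(m-r) * γ^r
      have e3 : z ^ ((m:ℤ) - r) * (h z ^ ((m:ℤ) - r) * (h z + z * deriv h z) ^ r)
          = z ^ ((m:ℤ) - r) * γ z ^ r := by rw [← this]
      exact mul_left_cancel₀ hcan e3
    have hzsub : h z ^ ((m:ℤ) - r) = h z ^ (m:ℤ) / h z ^ (r:ℤ) :=
      zpow_sub₀ (hne z hz) _ _
    rw [hzsub] at e2
    rw [zpow_natCast, zpow_natCast] at e2
    have hpr : h z ^ r ≠ 0 := pow_ne_zero _ (hne z hz)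
    field_simp at e2
    linear_combination e2
  -- φ ≡ 1
  set φ : ℂ → ℂ := fun w => ψ w * (h w + w * deriv h w) / (h w * γ w) with hφ
  have φ0 : φ 0 = 1 := by
    rw [hφ]
    simp only [zero_mul, add_zero, mul_zero]
    rw [ψ0, hh0, hγ0]
    norm_num
  have φpow : ∀ z ∈ ball (0:ℂ) ρ, φ z ^ r = 1 := by
    intro z hz
    rcases eq_or_ne z 0 with rfl | hzne
    · rw [φ0, one_pow]
    · rw [hφ]
      have key := keyA z hz hzne
      have hψr := ψpow z hz
      have hγz := hγne z
      have hhz := hne z hz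
      rw [div_pow, mul_pow, mul_pow, hψr]
      rw [div_eq_one_iff_eq (mul_ne_zero (pow_ne_zero _ hhz) (pow_ne_zero _ hγz))]
      linear_combination key
  have φdiff : ∀ z ∈ ball (0:ℂ) ρ, DifferentiableAt ℂ φ z := by
    intro z hz
    have d1 : DifferentiableAt ℂ ψ z := (ψderiv z hz).differentiableAt
    have d2 : DifferentiableAt ℂ h z := (hA z hz).differentiableAt
    have d3 : DifferentiableAt ℂ (deriv h) z := (analyticAt_deriv' (hA z hz)).differentiableAt
    have d4 : DifferentiableAt ℂ γ z := (hγA z hz).differentiableAt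
    exact (d1.mul (d2.add (differentiableAt_id.mul d3))).div (d2.mul d4)
      (mul_ne_zero (hne z hz) (hγne z))
  have φne : ∀ z ∈ ball (0:ℂ) ρ, φ z ≠ 0 := by
    intro z hz h0'
    have := φpow z hz
    rw [h0', zero_pow hr.ne'] at this
    exact zero_ne_one this
  have φderiv0 : ∀ z ∈ ball (0:ℂ) ρ, deriv φ z = 0 := by
    intro z hz
    have hev : (fun w => φ w ^ r) =ᶠ[𝓝 z] fun _ => 1 := by
      filter_upwards [isOpen_ball.mem_nhds hz] with w hw
      exact φpow w hw
    have h1 : deriv (fun w => φ w ^ r) z = 0 := by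
      rw [hev.deriv_eq]; exact deriv_const _ _
    rw [deriv_fun_pow (φdiff z hz) r] at h1
    have h2 : φ z ^ (r - 1) ≠ 0 := pow_ne_zero _ (φne z hz)
    have h3 : (r:ℂ) * φ z ^ (r - 1) ≠ 0 := mul_ne_zero hrne h2
    rcases mul_eq_zero.mp h1 with h | h
    · exact absurd h h3
    · exact h
  have φ1 : ∀ z ∈ ball (0:ℂ) ρ, φ z = 1 := by
    intro z hz
    rw [const_of_deriv_zero_ball φdiff φderiv0 z hz, φ0]
  -- the ODE for ψ
  have hODE : ∀ z ∈ ball (0:ℂ) ρ,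
      (m:ℂ) * ψ z + r * (z * deriv ψ z) = m * γ z := by
    intro z hz
    have hd : deriv ψ z = ψ z * (((m:ℂ)/r) * (deriv h z / h z)) := (ψderiv z hz).deriv
    have hφz := φ1 z hz
    rw [hφ] at hφz
    have hhz := hne z hz
    have hγz := hγne z
    rw [div_eq_one_iff_eq (mul_ne_zero hhz hγz)] at hφz
    rw [hd]
    field_simp
    linear_combination hφz
  -- the final formula
  have hlogψ : ∀ z ∈ ball (0:ℂ) ρ, Complex.log (ψ z) = ((m:ℂ)/r) * Complex.log (h z) := by
    intro z hz
    rw [hψ]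
    apply Complex.log_exp
    · have him : |(((m:ℂ)/r) * Complex.log (h z)).im| < Real.pi / 2 := by
        have h1 : ‖((m:ℂ)/r) * Complex.log (h z)‖ < Real.pi / 2 := by
          rw [norm_mul]
          have h2 : ‖((m:ℂ)/(r:ℂ))‖ = (m:ℝ)/r := by
            rw [show ((m:ℂ)/(r:ℂ)) = (((m:ℝ)/(r:ℝ) : ℝ) : ℂ) by push_cast; ring]
            rw [Complex.norm_real, Real.norm_eq_abs, abs_of_pos (by positivity)]
          rw [h2]
          calc (m:ℝ)/r * ‖Complex.log (h z)‖ < (m:ℝ)/r * b := by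
                apply mul_lt_mul_of_pos_left (hC z hz) (by positivity)
            _ = Real.pi / 2 := by rw [hb]; field_simp
        calc |(((m:ℂ)/r) * Complex.log (h z)).im| ≤ ‖((m:ℂ)/r) * Complex.log (h z)‖ :=
              Complex.abs_im_le_norm _
          _ < Real.pi / 2 := h1
      have := abs_lt.mp him
      linarith [Real.pi_pos, this.1]
    · have him : |(((m:ℂ)/r) * Complex.log (h z)).im| < Real.pi / 2 := by
        have h1 : ‖((m:ℂ)/r) * Complex.log (h z)‖ < Real.pi / 2 := by
          rw [norm_mul]
          have h2 : ‖((m:ℂ)/(r:ℂ))‖ = (m:ℝ)/r := by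
            rw [show ((m:ℂ)/(r:ℂ)) = (((m:ℝ)/(r:ℝ) : ℝ) : ℂ) by push_cast; ring]
            rw [Complex.norm_real, Real.norm_eq_abs, abs_of_pos (by positivity)]
          rw [h2]
          calc (m:ℝ)/r * ‖Complex.log (h z)‖ < (m:ℝ)/r * b := by
                apply mul_lt_mul_of_pos_left (hC z hz) (by positivity)
            _ = Real.pi / 2 := by rw [hb]; field_simp
        calc |(((m:ℂ)/r) * Complex.log (h z)).im| ≤ ‖((m:ℂ)/r) * Complex.log (h z)‖ :=
              Complex.abs_im_le_norm _
          _ < Real.pi / 2 := h1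
      have := abs_lt.mp him
      linarith [Real.pi_pos, this.2]
  intro z hz
  refine ⟨?_, ψan z hz, hODE z hz⟩
  rw [show (Complex.exp (((m:ℂ)/r) * Complex.log (dslope ζ 0 z))) = ψ z from rfl]
  rw [hlogψ z hz]
  have : ((r:ℂ)/m) * (((m:ℂ)/r) * Complex.log (h z)) = Complex.log (h z) := by
    field_simp
  rw [this, Complex.exp_log (hne z hz)]
  exact fact_zh z hz

/-- normal form of the meromorphic `r`-differential
`z^m α(z) (dz/z)^r`: existence and uniqueness of the normalizing coordinate. -/
theorem normalizing_coordinate_exists_unique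
    (U : Set ℂ) (hU : IsOpen U) (h0 : (0 : ℂ) ∈ U)
    (α : ℂ → ℂ) (hα : DifferentiableOn ℂ α U) (hα0 : ∀ z ∈ U, α z ≠ 0)
    (m r : ℕ) (hm : 0 < m) (hr : 0 < r) :
    (∃ U₁ : Set ℂ, IsOpen U₁ ∧ (0 : ℂ) ∈ U₁ ∧ U₁ ⊆ U ∧
      ∃ ζ : ℂ → ℂ, DifferentiableOn ℂ ζ U₁ ∧ ζ 0 = 0 ∧ deriv ζ 0 = 1 ∧
        ∀ z ∈ U₁, z ≠ 0 →
          ζ z ^ ((m : ℤ) - r) * (deriv ζ z) ^ r * α 0 = z ^ ((m : ℤ) - r) * α z) ∧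
    (∀ (U₁ U₂ : Set ℂ) (ζ₁ ζ₂ : ℂ → ℂ),
      IsOpen U₁ → (0 : ℂ) ∈ U₁ → U₁ ⊆ U →
      IsOpen U₂ → (0 : ℂ) ∈ U₂ → U₂ ⊆ U →
      DifferentiableOn ℂ ζ₁ U₁ → ζ₁ 0 = 0 → deriv ζ₁ 0 = 1 →
      (∀ z ∈ U₁, z ≠ 0 →
        ζ₁ z ^ ((m : ℤ) - r) * (deriv ζ₁ z) ^ r * α 0 = z ^ ((m : ℤ) - r) * α z) →
      DifferentiableOn ℂ ζ₂ U₂ → ζ₂ 0 = 0 → deriv ζ₂ 0 = 1 →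
      (∀ z ∈ U₂, z ≠ 0 →
        ζ₂ z ^ ((m : ℤ) - r) * (deriv ζ₂ z) ^ r * α 0 = z ^ ((m : ℤ) - r) * α z) →
      ∃ U₃ : Set ℂ, IsOpen U₃ ∧ (0 : ℂ) ∈ U₃ ∧ Set.EqOn ζ₁ ζ₂ U₃) := by
  have hmne : ((m:ℂ)) ≠ 0 := Nat.cast_ne_zero.mpr hm.ne'
  have hrne : ((r:ℂ)) ≠ 0 := Nat.cast_ne_zero.mpr hr.ne'
  have hα0ne : α 0 ≠ 0 := hα0 0 h0
  set γ : ℂ → ℂ := fun z => Complex.exp (Complex.log (α z / α 0) / r) with hγ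
  have hγ0 : γ 0 = 1 := by
    rw [hγ]
    simp only [div_self hα0ne, Complex.log_one, zero_div, Complex.exp_zero]
  have hγne : ∀ z, γ z ≠ 0 := fun z => Complex.exp_ne_zero _
  have hγpow : ∀ z ∈ U, γ z ^ r = α z / α 0 := by
    intro z hz
    rw [hγ]
    rw [← Complex.exp_nat_mul]
    rw [show (r:ℂ) * (Complex.log (α z / α 0) / r) = Complex.log (α z / α 0) by field_simp]
    exact Complex.exp_log (div_ne_zero (hα0 z hz) hα0ne)
  have hγan : ∀ z ∈ U, α z / α 0 ∈ Complex.slitPlane → AnalyticAt ℂ γ z := by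
    intro z hz hsl
    have hβ : AnalyticAt ℂ (fun w => α w / α 0) z :=
      (hα.analyticAt (hU.mem_nhds hz)).div analyticAt_const hα0ne
    exact ((hβ.clog hsl).div analyticAt_const hrne).cexp
  have hγan0 : AnalyticAt ℂ γ 0 :=
    hγan 0 h0 (by rw [div_self hα0ne]; exact Complex.one_mem_slitPlane)
  have hγev : ∀ᶠ z in 𝓝 (0:ℂ), AnalyticAt ℂ γ z := hγan0.eventually_analyticAt
  constructor
  · -- EXISTENCE
    obtain ⟨ψ, hψan, hψ0, hψode⟩ := exists_psi γ hγan0 m r hm hr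
    have hψ1 : ψ 0 = 1 := by rw [hψ0, hγ0]
    have evs : ∀ᶠ z in 𝓝 (0:ℂ),
        AnalyticAt ℂ ψ z ∧ ‖ψ z - 1‖ < 1/2 ∧
        ((m:ℂ) * ψ z + r * (z * deriv ψ z) = m * γ z) ∧ z ∈ U := by
      have e1 := hψan.eventually_analyticAt
      have e2 : ∀ᶠ z in 𝓝 (0:ℂ), ‖ψ z - 1‖ < 1/2 := by
        have ht : Filter.Tendsto ψ (𝓝 0) (𝓝 1) := by
          have := hψan.continuousAt; rwa [ContinuousAt, hψ1] at this
        have : ∀ᶠ y in 𝓝 (1:ℂ), ‖y - 1‖ < 1/2 := by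
          have hb : Metric.ball (1:ℂ) (1/2) ∈ 𝓝 (1:ℂ) := Metric.ball_mem_nhds _ (by norm_num)
          filter_upwards [hb] with y hy
          simpa [dist_eq_norm] using hy
        exact ht.eventually this
      have e4 : ∀ᶠ z in 𝓝 (0:ℂ), z ∈ U := hU.mem_nhds h0
      filter_upwards [e1, e2, hψode, e4] with z h1 h2 h3 h4
      exact ⟨h1, h2, h3, h4⟩
    obtain ⟨ρ, hρpos, hball⟩ := Metric.eventually_nhds_iff_ball.mp evs
    have hsub : ball (0:ℂ) ρ ⊆ U := fun z hz => (hball z hz).2.2.2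
    have hψA : ∀ z ∈ ball (0:ℂ) ρ, AnalyticAt ℂ ψ z := fun z hz => (hball z hz).1
    have hψB : ∀ z ∈ ball (0:ℂ) ρ, ‖ψ z - 1‖ < 1/2 := fun z hz => (hball z hz).2.1
    have hψC : ∀ z ∈ ball (0:ℂ) ρ, (m:ℂ) * ψ z + r * (z * deriv ψ z) = m * γ z :=
      fun z hz => (hball z hz).2.2.1
    have hψS : ∀ z ∈ ball (0:ℂ) ρ, ψ z ∈ Complex.slitPlane := by
      intro z hz
      rw [Complex.mem_slitPlane_iff]
      left
      have := hψB z hz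
      have h1 : |(ψ z - 1).re| ≤ ‖ψ z - 1‖ := Complex.abs_re_le_norm _
      have h2 : (ψ z - 1).re = (ψ z).re - 1 := by simp
      rw [h2] at h1
      cases (abs_le.mp h1) with
      | intro hl hr' => linarith
    have hψne : ∀ z ∈ ball (0:ℂ) ρ, ψ z ≠ 0 := fun z hz =>
      Complex.slitPlane_ne_zero (hψS z hz)
    set g : ℂ → ℂ := fun w => Complex.exp (((r:ℂ)/m) * Complex.log (ψ w)) with hg
    have hgne : ∀ z, g z ≠ 0 := fun z => Complex.exp_ne_zero _
    have hgd : ∀ z ∈ ball (0:ℂ) ρ,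
        HasDerivAt g (g z * (((r:ℂ)/m) * (deriv ψ z / ψ z))) z := by
      intro z hz
      have hψd : HasDerivAt ψ (deriv ψ z) z := (hψA z hz).differentiableAt.hasDerivAt
      have := ((hψd.clog (hψS z hz)).const_mul (((r:ℂ)/m))).cexp
      simpa [hg, mul_comm] using this
    set ζ : ℂ → ℂ := fun w => w * g w with hζ
    have hζd : ∀ z ∈ ball (0:ℂ) ρ,
        HasDerivAt ζ (g z + z * (g z * (((r:ℂ)/m) * (deriv ψ z / ψ z)))) z := by
      intro z hz
      have := (hasDerivAt_id' z).fun_mul (hgd z hz)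
      rw [hζ]; exact this.congr_deriv (by ring)
    have h0mem : (0:ℂ) ∈ ball (0:ℂ) ρ := mem_ball_self hρpos
    have hg0 : g 0 = 1 := by
      rw [hg]
      simp only [hψ1, Complex.log_one, mul_zero, Complex.exp_zero]
    have hgpow : ∀ z ∈ ball (0:ℂ) ρ, g z ^ m = ψ z ^ r := by
      intro z hz
      rw [hg, ← Complex.exp_nat_mul]
      rw [show (m:ℂ) * (((r:ℂ)/m) * Complex.log (ψ z)) = (r:ℂ) * Complex.log (ψ z) by
        field_simp <;> ring]
      rw [Complex.exp_nat_mul, Complex.exp_log (hψne z hz)]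
    refine ⟨ball (0:ℂ) ρ, isOpen_ball, h0mem, hsub, ζ, ?_, by simp [hζ], ?_, ?_⟩
    · exact fun z hz => ((hζd z hz).differentiableAt).differentiableWithinAt
    · have := (hζd 0 h0mem).deriv
      rw [this]
      simp [hg0]
    · intro z hz hzne
      have hζz : ζ z = z * g z := rfl
      have hdζ : deriv ζ z = g z + z * (g z * (((r:ℂ)/m) * (deriv ψ z / ψ z))) :=
        (hζd z hz).deriv
      have step1 : deriv ζ z = g z * γ z / ψ z := by
        rw [hdζ]
        have hode := hψC z hz
        rw [eq_div_iff (hψne z hz)]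
        field_simp [hmne, hψne z hz]
        linear_combination g z * hode
      have hγr : γ z ^ r = α z / α 0 := hγpow z (hsub hz)
      have hgm := hgpow z hz
      rw [step1, hζz, mul_zpow, zpow_sub₀ (hgne z), zpow_natCast, zpow_natCast]
      have hznez : z ^ ((m:ℤ) - r) ≠ 0 := zpow_ne_zero _ hzne
      have hγr' : γ z ^ r * α 0 = α z := by
        rw [hγr]; field_simp
      have key : g z ^ m / g z ^ r * (g z * γ z / ψ z) ^ r * α 0 = α z := by
        rw [hgm, div_pow, mul_pow]
        field_simp [hψne z hz, hgne z, hα0ne]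
        linear_combination hγr'
      calc z ^ ((m:ℤ) - r) * (g z ^ m / g z ^ r) * (g z * γ z / ψ z) ^ r * α 0
          = z ^ ((m:ℤ) - r) * (g z ^ m / g z ^ r * (g z * γ z / ψ z) ^ r * α 0) := by ring
        _ = z ^ ((m:ℤ) - r) * α z := by rw [key]
  · -- UNIQUENESS
    intro U₁ U₂ ζ₁ ζ₂ hU₁ h01 hU₁U hU₂ h02 hU₂U hζ₁d hζ₁0 hζ₁'0 heq₁ hζ₂d hζ₂0 hζ₂'0 heq₂
    have conv : ∀ (V : Set ℂ), V ⊆ U → (∀ z ∈ V, z ≠ 0 →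
        (fun ζ : ℂ → ℂ => ζ z ^ ((m:ℤ) - r) * (deriv ζ z) ^ r * α 0
          = z ^ ((m:ℤ) - r) * α z) ζ₁) → True := fun _ _ _ => trivial
    have heq₁' : ∀ z ∈ U₁, z ≠ 0 →
        ζ₁ z ^ ((m:ℤ) - r) * (deriv ζ₁ z) ^ r = z ^ ((m:ℤ) - r) * γ z ^ r := by
      intro z hz hzne
      have := heq₁ z hz hzne
      rw [hγpow z (hU₁U hz)]
      field_simp
      linear_combination this
    have heq₂' : ∀ z ∈ U₂, z ≠ 0 →
        ζ₂ z ^ ((m:ℤ) - r) * (deriv ζ₂ z) ^ r = z ^ ((m:ℤ) - r) * γ z ^ r := by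
      intro z hz hzne
      have := heq₂ z hz hzne
      rw [hγpow z (hU₂U hz)]
      field_simp
      linear_combination this
    obtain ⟨ρ₁, hρ₁, hrec₁⟩ := recover U₁ hU₁ h01 ζ₁ hζ₁d hζ₁0 hζ₁'0 γ hγev hγ0 hγne
      m r hm hr heq₁'
    obtain ⟨ρ₂, hρ₂, hrec₂⟩ := recover U₂ hU₂ h02 ζ₂ hζ₂d hζ₂0 hζ₂'0 γ hγev hγ0 hγne
      m r hm hr heq₂'
    set ρ := min ρ₁ ρ₂ with hρ
    have hρpos : 0 < ρ := lt_min hρ₁ hρ₂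
    have hsub₁ : ball (0:ℂ) ρ ⊆ ball (0:ℂ) ρ₁ := ball_subset_ball (min_le_left _ _)
    have hsub₂ : ball (0:ℂ) ρ ⊆ ball (0:ℂ) ρ₂ := ball_subset_ball (min_le_right _ _)
    set ψ₁ : ℂ → ℂ := fun w => Complex.exp (((m:ℂ)/r) * Complex.log (dslope ζ₁ 0 w))
    set ψ₂ : ℂ → ℂ := fun w => Complex.exp (((m:ℂ)/r) * Complex.log (dslope ζ₂ 0 w))
    have hψeq : Set.EqOn ψ₁ ψ₂ (ball (0:ℂ) ρ) := by
      apply psi_unique ψ₁ ψ₂ γ m r hm hr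
      · exact fun z hz => ((hrec₁ z (hsub₁ hz)).2.1).differentiableAt
      · exact fun z hz => ((hrec₂ z (hsub₂ hz)).2.1).differentiableAt
      · exact fun z hz => (hrec₁ z (hsub₁ hz)).2.2
      · exact fun z hz => (hrec₂ z (hsub₂ hz)).2.2
    refine ⟨ball (0:ℂ) ρ, isOpen_ball, mem_ball_self hρpos, ?_⟩
    intro z hz
    have e1 := (hrec₁ z (hsub₁ hz)).1
    have e2 := (hrec₂ z (hsub₂ hz)).1
    have h12 : Complex.exp (((m:ℂ)/r) * Complex.log (dslope ζ₁ 0 z))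
        = Complex.exp (((m:ℂ)/r) * Complex.log (dslope ζ₂ 0 z)) := hψeq hz
    rw [e1, e2, h12]
end
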